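/- arXiv:1108.2192 — 12 statements merged into one kernel-verified Lean document; each statement's English description precedes it below -/
import Mathlib

section
/- Let J ⊆ ℝ be an open interval (the time interval) and let G, θ : ℝ × J → ℝ be C² functions with G(r,t) > 0 for all (r,t). Suppose that for all (r,t) the complex-valued evolution equation ∂/∂t ( G(r,t) · exp(3·i·θ(r,t)) ) = ∂/∂r ( (∂/∂r exp(3·i·θ(r,t))) / G(r,t) ) holds, where exp is the complex exponential and i the imaginary unit, and the partial derivatives of the complex-valued functions are taken componentwise. Then for all (r,t): ∂G/∂t = −9 (∂θ/∂r)² / G and ∂θ/∂t = (∂²θ/∂r²)/G² − (∂G/∂r)(∂θ/∂r)/G³. -/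
open Real Complex

/-- Reduction of the Laplacian coflow of a coclosed G₂-structure over a
Calabi–Yau 6-manifold to scalar PDEs: if `G(r,t) > 0` and the phase `θ(r,t)`
are C² on `ℝ × J` (J an open time interval) and satisfy the complex evolution
equation `∂ₜ(G e^{3iθ}) = ∂ᵣ((∂ᵣ e^{3iθ})/G)`, then
`∂ₜG = -9 (∂ᵣθ)²/G` and `∂ₜθ = ∂ᵣ²θ/G² - ∂ᵣG ∂ᵣθ/G³`. -/
theorem cy_coflow_evolution_equations
    (a b : ℝ) (G θ : ℝ → ℝ → ℝ)
    (J : Set ℝ) (hJ : J = Set.Ioo a b)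
    (hGsmooth : ContDiffOn ℝ 2 (fun p : ℝ × ℝ => G p.1 p.2) (Set.univ ×ˢ J))
    (hθsmooth : ContDiffOn ℝ 2 (fun p : ℝ × ℝ => θ p.1 p.2) (Set.univ ×ˢ J))
    (hGpos : ∀ r : ℝ, ∀ t ∈ J, 0 < G r t)
    (hPDE : ∀ r : ℝ, ∀ t ∈ J,
      deriv (fun s : ℝ => (G r s : ℂ) * Complex.exp (3 * Complex.I * (θ r s : ℂ))) t
        = deriv (fun ρ : ℝ =>
            deriv (fun σ : ℝ => Complex.exp (3 * Complex.I * (θ σ t : ℂ))) ρ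
              / (G ρ t : ℂ)) r) :
    ∀ r : ℝ, ∀ t ∈ J,
      deriv (fun s : ℝ => G r s) t
        = -9 * (deriv (fun ρ : ℝ => θ ρ t) r) ^ 2 / G r t ∧
      deriv (fun s : ℝ => θ r s) t
        = deriv (deriv (fun ρ : ℝ => θ ρ t)) r / (G r t) ^ 2
          - deriv (fun ρ : ℝ => G ρ t) r * deriv (fun ρ : ℝ => θ ρ t) r / (G r t) ^ 3 := by
  intro r t ht
  have hJopen : IsOpen J := hJ ▸ isOpen_Ioo
  -- r-sections are C²
  have hcr : ContDiff ℝ 2 (fun ρ : ℝ => (ρ, t)) := contDiff_id.prodMk contDiff_const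
  have hθR : ContDiff ℝ 2 (fun ρ => θ ρ t) := by
    rw [← contDiffOn_univ]
    exact hθsmooth.comp hcr.contDiffOn (fun x _ => ⟨trivial, ht⟩)
  have hGR : ContDiff ℝ 2 (fun ρ => G ρ t) := by
    rw [← contDiffOn_univ]
    exact hGsmooth.comp hcr.contDiffOn (fun x _ => ⟨trivial, ht⟩)
  -- t-sections are C² on J
  have hct : ContDiff ℝ 2 (fun s : ℝ => (r, s)) := contDiff_const.prodMk contDiff_id
  have hθT : ContDiffOn ℝ 2 (fun s => θ r s) J :=
    hθsmooth.comp hct.contDiffOn (fun x hx => ⟨trivial, hx⟩)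
  have hGT : ContDiffOn ℝ 2 (fun s => G r s) J :=
    hGsmooth.comp hct.contDiffOn (fun x hx => ⟨trivial, hx⟩)
  set g := G r t with hgdef
  have hg : 0 < g := hGpos r t ht
  have hgC : (g : ℂ) ≠ 0 := by exact_mod_cast hg.ne'
  set θ' : ℝ → ℝ := deriv (fun ρ => θ ρ t) with hθ'def
  set θt := deriv (fun s => θ r s) t with hθtdef
  set Gt := deriv (fun s => G r s) t with hGtdef
  set θr := θ' r with hθrdef
  set θrr := deriv θ' r with hθrrdef
  set Gr := deriv (fun ρ => G ρ t) r with hGrdef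
  -- time derivatives exist
  have hdθt : HasDerivAt (fun s => θ r s) θt t :=
    ((hθT.contDiffAt (hJopen.mem_nhds ht)).differentiableAt two_ne_zero).hasDerivAt
  have hdGt : HasDerivAt (fun s => G r s) Gt t :=
    ((hGT.contDiffAt (hJopen.mem_nhds ht)).differentiableAt two_ne_zero).hasDerivAt
  -- spatial derivatives
  have hθ'c : ContDiff ℝ 1 θ' := by
    have h : ContDiff ℝ ((1:ℕ) + 1) (fun ρ => θ ρ t) := by exact_mod_cast hθR
    exact (contDiff_succ_iff_deriv.mp h).2.2
  have hdθr : ∀ ρ : ℝ, HasDerivAt (fun σ => θ σ t) (θ' ρ) ρ := fun ρ =>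
    ((hθR.differentiable two_ne_zero) ρ).hasDerivAt
  have hdθrr : HasDerivAt θ' θrr r :=
    ((hθ'c.differentiable one_ne_zero) r).hasDerivAt
  have hdGr : HasDerivAt (fun ρ => G ρ t) Gr r :=
    ((hGR.differentiable two_ne_zero) r).hasDerivAt
  set E : ℂ := Complex.exp (3 * Complex.I * (θ r t : ℂ)) with hEdef
  have hE : E ≠ 0 := Complex.exp_ne_zero _
  -- LHS of PDE
  have hexp_t : HasDerivAt (fun s : ℝ => Complex.exp (3 * Complex.I * (θ r s : ℂ)))
      (E * (3 * Complex.I * (θt : ℂ))) t :=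
    ((hdθt.ofReal_comp).const_mul (3 * Complex.I)).cexp
  have hL : deriv (fun s : ℝ => (G r s : ℂ) * Complex.exp (3 * Complex.I * (θ r s : ℂ))) t
      = (Gt : ℂ) * E + (g : ℂ) * (E * (3 * Complex.I * (θt : ℂ))) :=
    ((hdGt.ofReal_comp).mul hexp_t).deriv
  -- inner spatial derivative
  have hinner : ∀ ρ : ℝ,
      deriv (fun σ : ℝ => Complex.exp (3 * Complex.I * (θ σ t : ℂ))) ρ
        = Complex.exp (3 * Complex.I * (θ ρ t : ℂ)) * (3 * Complex.I * (θ' ρ : ℂ)) := fun ρ =>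
    ((((hdθr ρ).ofReal_comp).const_mul (3 * Complex.I)).cexp).deriv
  -- outer spatial derivative
  have hN : HasDerivAt (fun ρ : ℝ => Complex.exp (3 * Complex.I * (θ ρ t : ℂ)) * (3 * Complex.I * (θ' ρ : ℂ)))
      (E * (3 * Complex.I * (θr : ℂ)) * (3 * Complex.I * (θr : ℂ)) + E * (3 * Complex.I * (θrr : ℂ))) r :=
    ((((hdθr r).ofReal_comp).const_mul (3 * Complex.I)).cexp).mul
      ((hdθrr.ofReal_comp).const_mul (3 * Complex.I))
  have hR : deriv (fun ρ : ℝ =>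
      deriv (fun σ : ℝ => Complex.exp (3 * Complex.I * (θ σ t : ℂ))) ρ / (G ρ t : ℂ)) r
      = ((E * (3 * Complex.I * (θr : ℂ)) * (3 * Complex.I * (θr : ℂ)) + E * (3 * Complex.I * (θrr : ℂ)))
          * (g : ℂ) - E * (3 * Complex.I * (θr : ℂ)) * (Gr : ℂ)) / (g : ℂ) ^ 2 := by
    have : deriv (fun ρ : ℝ =>
        deriv (fun σ : ℝ => Complex.exp (3 * Complex.I * (θ σ t : ℂ))) ρ / (G ρ t : ℂ)) r
        = deriv (fun ρ : ℝ =>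
            Complex.exp (3 * Complex.I * (θ ρ t : ℂ)) * (3 * Complex.I * (θ' ρ : ℂ)) / (G ρ t : ℂ)) r := by
      congr 1
      funext ρ
      rw [hinner ρ]
    rw [this]
    exact (hN.div (hdGr.ofReal_comp) hgC).deriv
  have key := hPDE r t ht
  rw [hL, hR] at key
  have keyc : ((Gt : ℂ) * E + (g : ℂ) * (E * (3 * Complex.I * (θt : ℂ)))) * (g : ℂ) ^ 2
      = (E * (3 * Complex.I * (θr : ℂ)) * (3 * Complex.I * (θr : ℂ)) + E * (3 * Complex.I * (θrr : ℂ)))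
          * (g : ℂ) - E * (3 * Complex.I * (θr : ℂ)) * (Gr : ℂ) := by
    rw [key]
    field_simp
  have key2 : ((Gt * g ^ 2 : ℝ) : ℂ) + ((3 * g ^ 3 * θt : ℝ) : ℂ) * Complex.I
      = ((-9 * θr ^ 2 * g : ℝ) : ℂ) + ((3 * (θrr * g - θr * Gr) : ℝ) : ℂ) * Complex.I := by
    refine mul_right_cancel₀ hE ?_
    push_cast
    linear_combination keyc + 9 * (θr : ℂ) ^ 2 * (g : ℂ) * E * Complex.I_sq
  have eRe := congrArg Complex.re key2
  have eIm := congrArg Complex.im key2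
  simp only [Complex.add_re, Complex.mul_re, Complex.I_re, Complex.I_im,
    Complex.ofReal_re, Complex.ofReal_im, Complex.add_im, Complex.mul_im,
    mul_zero, mul_one, zero_mul, one_mul, sub_zero, zero_sub, add_zero,
    zero_add, neg_neg, mul_neg, neg_zero] at eRe eIm
  have hgne : g ≠ 0 := hg.ne'
  constructor
  · rw [eq_div_iff hgne]
    apply mul_right_cancel₀ hgne
    linear_combination eRe
  · have hg2 : g ^ 2 ≠ 0 := pow_ne_zero _ hgne
    have hg3 : g ^ 3 ≠ 0 := pow_ne_zero _ hgne
    field_simp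
    linear_combination eIm / 3
end

section
/- Fix b, c ∈ ℝ and define θ : ℝ → ℝ by θ(r) = (2/3)·arctan(c·e^{b r}) and s : ℝ → ℝ by s(r) = b·(1 − c²·e^{2 b r})/(1 + c²·e^{2 b r}). Then for all r ∈ ℝ: (d/dr) cos(3θ(r)) − cos(3θ(r))·s(r) = −b, (d/dr) sin(3θ(r)) − sin(3θ(r))·s(r) = 0, and s(r) = b·cos(3θ(r)). -/
open Real

lemma cos_two_arctan (t : ℝ) : Real.cos (2 * Real.arctan t) = (1 - t ^ 2) / (1 + t ^ 2) := by
  have h : (0:ℝ) < 1 + t ^ 2 := by positivity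
  rw [Real.cos_two_mul, Real.cos_arctan]
  rw [div_pow, one_pow, Real.sq_sqrt (by positivity)]
  field_simp
  ring

lemma sin_two_arctan (t : ℝ) : Real.sin (2 * Real.arctan t) = 2 * t / (1 + t ^ 2) := by
  have h : (0:ℝ) < 1 + t ^ 2 := by positivity
  have hss : Real.sqrt (1 + t ^ 2) * Real.sqrt (1 + t ^ 2) = 1 + t ^ 2 :=
    Real.mul_self_sqrt h.le
  have hne : Real.sqrt (1 + t ^ 2) ≠ 0 := by positivity
  rw [Real.sin_two_mul, Real.sin_arctan, Real.cos_arctan]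
  field_simp
  rw [Real.sq_sqrt h.le]

lemma sq_exp (b c x : ℝ) : (c * Real.exp (b * x)) ^ 2 = c ^ 2 * Real.exp (2 * b * x) := by
  rw [mul_pow, sq (Real.exp (b * x)), ← Real.exp_add]
  ring_nf

/-- The explicit pair `θ(r) = (2/3) arctan (c e^{br})`, `s(r) = k'(r) =
b (1 - c² e^{2br})/(1 + c² e^{2br})` solves the steady gradient soliton system
for the Laplacian coflow over a Calabi–Yau 6-manifold (with real integration
constant `b`), and `s = b cos 3θ`. -/
theorem cy_soliton_explicit_solution
    (b c : ℝ) (θ s : ℝ → ℝ)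
    (hθ : ∀ r : ℝ, θ r = (2 / 3) * Real.arctan (c * Real.exp (b * r)))
    (hs : ∀ r : ℝ, s r = b * (1 - c ^ 2 * Real.exp (2 * b * r)) / (1 + c ^ 2 * Real.exp (2 * b * r))) :
    (∀ r : ℝ, deriv (fun x => Real.cos (3 * θ x)) r - Real.cos (3 * θ r) * s r = -b) ∧
    (∀ r : ℝ, deriv (fun x => Real.sin (3 * θ x)) r - Real.sin (3 * θ r) * s r = 0) ∧
    (∀ r : ℝ, s r = b * Real.cos (3 * θ r)) := by
  -- closed forms
  set g : ℝ → ℝ := fun x => c ^ 2 * Real.exp (2 * b * x) with hg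
  have hgpos : ∀ x, (0:ℝ) < 1 + g x := fun x => by
    have := Real.exp_pos (2 * b * x); positivity
  have hcos : ∀ x, Real.cos (3 * θ x) = (1 - g x) / (1 + g x) := by
    intro x
    rw [hθ, show 3 * (2 / 3 * Real.arctan (c * Real.exp (b * x))) =
      2 * Real.arctan (c * Real.exp (b * x)) by ring, cos_two_arctan, sq_exp]
  have hsin : ∀ x, Real.sin (3 * θ x) = 2 * (c * Real.exp (b * x)) / (1 + g x) := by
    intro x
    rw [hθ, show 3 * (2 / 3 * Real.arctan (c * Real.exp (b * x))) =
      2 * Real.arctan (c * Real.exp (b * x)) by ring, sin_two_arctan, sq_exp]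
  -- derivative of g
  have hg' : ∀ x, HasDerivAt g (2 * b * g x) x := by
    intro x
    have h1 : HasDerivAt (fun x : ℝ => 2 * b * x) (2 * b) x := by
      simpa using (hasDerivAt_id x).const_mul (2 * b)
    have h2 := (h1.exp).const_mul (c ^ 2)
    rw [show 2 * b * g x = c ^ 2 * (Real.exp (2 * b * x) * (2 * b)) by
      show 2 * b * (c ^ 2 * Real.exp (2 * b * x)) = _; ring]
    exact h2
  have hone : ∀ x, HasDerivAt (fun x => 1 + g x) (2 * b * g x) x := fun x =>
    (hg' x).const_add 1
  -- derivative of cos(3θ)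
  have hdc : ∀ x, HasDerivAt (fun x => Real.cos (3 * θ x))
      (-(4 * b * g x) / (1 + g x) ^ 2) x := by
    intro x
    have hnum : HasDerivAt (fun x => 1 - g x) (-(2 * b * g x)) x := (hg' x).const_sub 1
    have := hnum.div (hone x) (ne_of_gt (hgpos x))
    have heq : (fun x => (1 - g x) / (1 + g x)) = fun x => Real.cos (3 * θ x) := by
      funext x; rw [hcos]
    rw [show ((fun x => 1 - g x) / fun x => 1 + g x) = fun x => (1 - g x) / (1 + g x) from rfl] at this
    rw [heq] at this
    exact this.congr_deriv (by ring)
  -- derivative of sin(3θ)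
  have hds : ∀ x, HasDerivAt (fun x => Real.sin (3 * θ x))
      (2 * b * (c * Real.exp (b * x)) * (1 - g x) / (1 + g x) ^ 2) x := by
    intro x
    have hu : HasDerivAt (fun x => 2 * (c * Real.exp (b * x)))
        (2 * c * (b * Real.exp (b * x))) x := by
      have h1 : HasDerivAt (fun x : ℝ => b * x) b x := by
        simpa using (hasDerivAt_id x).const_mul b
      have := (h1.exp).const_mul (2 * c)
      rw [show (fun x => 2 * (c * Real.exp (b * x))) = fun y => 2 * c * Real.exp (b * y) by
        funext y; ring, show 2 * c * (b * Real.exp (b * x)) = 2 * c * (Real.exp (b * x) * b) by ring]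
      exact this
    have := hu.div (hone x) (ne_of_gt (hgpos x))
    have heq : (fun x => 2 * (c * Real.exp (b * x)) / (1 + g x)) =
        fun x => Real.sin (3 * θ x) := by funext x; rw [hsin]
    rw [show ((fun x => 2 * (c * Real.exp (b * x))) / fun x => 1 + g x) =
      fun x => 2 * (c * Real.exp (b * x)) / (1 + g x) from rfl] at this
    rw [heq] at this
    have hgx : g x = c ^ 2 * Real.exp (2 * b * x) := rfl
    have hsq : Real.exp (b * x) * Real.exp (b * x) = Real.exp (2 * b * x) := by
      rw [← Real.exp_add]; ring_nf
    exact this.congr_deriv (by ring)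
  refine ⟨?_, ?_, ?_⟩
  · intro r
    rw [(hdc r).deriv, hcos, hs]
    have h := hgpos r
    simp only [hg] at h ⊢
    field_simp
    ring
  · intro r
    rw [(hds r).deriv, hsin, hs]
    have h := hgpos r
    field_simp
    ring
  · intro r
    rw [hcos, hs]
    have h := hgpos r
    simp only [hg] at h ⊢
    field_simp
end

section
/- Let b ∈ ℝ with b ≠ 0, and let θ : ℝ → ℝ be a differentiable function satisfying 3θ'(r) = b·sin(3θ(r)) for all r and 0 < θ(0) < π/3. Then there exists a constant c > 0 such that θ(r) = (2/3)·arctan(c·e^{b r}) for all r ∈ ℝ. -/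
open Real

/-- Classification of nonconstant soliton phase functions: every solution of
`3θ' = b sin 3θ` (`b ≠ 0`) with initial value strictly between the equilibria
`0` and `π/3` has the explicit arctan-exponential form. -/
theorem cy_soliton_phase_classification
    (b : ℝ) (hb : b ≠ 0) (θ : ℝ → ℝ)
    (hθ : Differentiable ℝ θ)
    (hode : ∀ r : ℝ, 3 * deriv θ r = b * Real.sin (3 * θ r))
    (h0 : 0 < θ 0) (h1 : θ 0 < Real.pi / 3) :
    ∃ c : ℝ, 0 < c ∧ ∀ r : ℝ, θ r = (2 / 3) * Real.arctan (c * Real.exp (b * r)) := by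
  have hθc : Continuous θ := hθ.continuous
  -- derivative of θ
  have hθ' : ∀ r, HasDerivAt θ (b * Real.sin (3 * θ r) / 3) r := by
    intro r
    have h := (hθ r).hasDerivAt
    have : deriv θ r = b * Real.sin (3 * θ r) / 3 := by
      have := hode r; linarith
    rwa [this] at h
  -- u = cos (3θ), continuous
  set u : ℝ → ℝ := fun r => Real.cos (3 * θ r) with hu
  have hucont : Continuous u := Real.continuous_cos.comp (continuous_const.mul hθc)
  -- U = antiderivative of u
  set U : ℝ → ℝ := fun r => ∫ t in (0:ℝ)..r, u t with hU
  have hU' : ∀ r, HasDerivAt U (u r) r := fun r =>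
    (hucont.integral_hasStrictDerivAt 0 r).hasDerivAt
  -- g = sin(3θ) * exp(-b U) has zero derivative
  set g : ℝ → ℝ := fun r => Real.sin (3 * θ r) * Real.exp (-b * U r) with hg
  have hg' : ∀ r, HasDerivAt g 0 r := by
    intro r
    have h1' : HasDerivAt (fun r => Real.sin (3 * θ r))
        (Real.cos (3 * θ r) * (3 * (b * Real.sin (3 * θ r) / 3))) r := by
      have := ((hθ' r).const_mul 3).sin
      simpa using this
    have h2' : HasDerivAt (fun r => Real.exp (-b * U r))
        (Real.exp (-b * U r) * (-b * u r)) r := by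
      have := ((hU' r).const_mul (-b)).exp
      simpa [mul_comm] using this
    have := h1'.mul h2'
    have key : Real.cos (3 * θ r) * (3 * (b * Real.sin (3 * θ r) / 3)) *
        Real.exp (-b * U r) + Real.sin (3 * θ r) *
        (Real.exp (-b * U r) * (-b * u r)) = 0 := by
      simp only [hu]; ring
    rw [key] at this
    exact this
  have hgdiff : Differentiable ℝ g := fun r => (hg' r).differentiableAt
  have hgconst : ∀ r, g r = g 0 := by
    intro r
    exact is_const_of_deriv_eq_zero hgdiff (fun x => (hg' x).deriv) r 0
  have hsin0 : 0 < Real.sin (3 * θ 0) :=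
    Real.sin_pos_of_pos_of_lt_pi (by linarith) (by linarith [Real.pi_pos])
  have hsin : ∀ r, 0 < Real.sin (3 * θ r) := by
    intro r
    have h := hgconst r
    have hg0 : 0 < g 0 := by
      simp only [hg]
      exact mul_pos hsin0 (Real.exp_pos _)
    have hpos : 0 < g r := by rw [hgconst r]; exact hg0
    simp only [hg] at hpos
    rcases mul_pos_iff.mp hpos with ⟨h1', _⟩ | ⟨_, h2'⟩
    · exact h1'
    · exact absurd h2' (not_lt.mpr (Real.exp_pos _).le)
  -- θ stays in (0, π/3)
  have hrange : ∀ r, 0 < θ r ∧ θ r < Real.pi / 3 := by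
    intro r
    constructor
    · by_contra h
      push_neg at h
      have : (0:ℝ) ∈ Set.uIcc (θ r) (θ 0) := Set.mem_uIcc.mpr (Or.inl ⟨h, h0.le⟩)
      have := intermediate_value_uIcc (hθc.continuousOn (s := Set.uIcc r 0))
      obtain ⟨s, _, hs⟩ := this (Set.mem_uIcc.mpr (Or.inl ⟨h, h0.le⟩))
      have := hsin s
      rw [hs] at this
      simp at this
    · by_contra h
      push_neg at h
      obtain ⟨s, _, hs⟩ := intermediate_value_uIcc
        (hθc.continuousOn (s := Set.uIcc 0 r))
        (Set.mem_uIcc.mpr (Or.inl ⟨h1.le, h⟩) : Real.pi / 3 ∈ _)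
      have := hsin s
      rw [hs, show 3 * (Real.pi / 3) = Real.pi by ring, Real.sin_pi] at this
      exact lt_irrefl 0 this
  -- T = tan(3θ/2) satisfies T' = b T
  have hhalf : ∀ r, 0 < 3 * θ r / 2 ∧ 3 * θ r / 2 < Real.pi / 2 := by
    intro r; obtain ⟨a1, a2⟩ := hrange r; constructor <;> linarith
  have hcoshalf : ∀ r, 0 < Real.cos (3 * θ r / 2) := by
    intro r
    exact Real.cos_pos_of_mem_Ioo ⟨by linarith [(hhalf r).1, Real.pi_pos], (hhalf r).2⟩
  set T : ℝ → ℝ := fun r => Real.tan (3 * θ r / 2) with hT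
  have hT' : ∀ r, HasDerivAt T (b * T r) r := by
    intro r
    have hinner : HasDerivAt (fun r => 3 * θ r / 2)
        (3 * (b * Real.sin (3 * θ r) / 3) / 2) r := ((hθ' r).const_mul 3).div_const 2
    have htan := (Real.hasDerivAt_tan (ne_of_gt (hcoshalf r))).comp r hinner
    have key : 1 / Real.cos (3 * θ r / 2) ^ 2 * (3 * (b * Real.sin (3 * θ r) / 3) / 2)
        = b * Real.tan (3 * θ r / 2) := by
      have hs2 : Real.sin (3 * θ r) = 2 * Real.sin (3 * θ r / 2) * Real.cos (3 * θ r / 2) := by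
        rw [← Real.sin_two_mul]; ring_nf
      rw [hs2, Real.tan_eq_sin_div_cos]
      have := (hcoshalf r).ne'
      field_simp
    rw [key] at htan
    exact htan
  -- T r = T 0 * exp (b r)
  set h : ℝ → ℝ := fun r => T r * Real.exp (-b * r) with hh
  have hh' : ∀ r, HasDerivAt h 0 r := by
    intro r
    have he : HasDerivAt (fun r : ℝ => Real.exp (-b * r)) (Real.exp (-b * r) * (-b)) r := by
      have := ((hasDerivAt_id r).const_mul (-b)).exp
      simpa [mul_comm] using this
    have := (hT' r).mul he
    have key : b * T r * Real.exp (-b * r) + T r * (Real.exp (-b * r) * (-b)) = 0 := by ring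
    rw [key] at this
    exact this
  have hhconst : ∀ r, h r = h 0 := fun r =>
    is_const_of_deriv_eq_zero (fun x => (hh' x).differentiableAt) (fun x => (hh' x).deriv) r 0
  have hT0pos : 0 < T 0 := Real.tan_pos_of_pos_of_lt_pi_div_two (hhalf 0).1 (hhalf 0).2
  refine ⟨T 0, hT0pos, fun r => ?_⟩
  have hTr : T r = T 0 * Real.exp (b * r) := by
    have := hhconst r
    simp only [hh] at this
    have hexp : Real.exp (-b * 0) = 1 := by norm_num
    rw [hexp, mul_one] at this
    have : T r = T 0 * Real.exp (b * r) := by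
      have h2 : T r = T 0 / Real.exp (-b * r) := by
        field_simp at this ⊢; linarith [this]
      rw [h2, show -b * r = -(b * r) by ring, Real.exp_neg, div_inv_eq_mul]
    exact this
  have harctan : Real.arctan (T r) = 3 * θ r / 2 :=
    Real.arctan_tan (by linarith [(hhalf r).1, Real.pi_pos]) (hhalf r).2
  rw [← hTr, harctan]
  ring
end

section
/- Let J ⊆ ℝ be an open interval and let G, h, θ : ℝ × J → ℝ be C² functions (C³ in r) with G > 0 and h > 0 everywhere. Suppose that for all (r,t): (i) ∂h/∂r = G·cos(3θ); (ii) ∂h/∂t = (1/(G h³))·∂/∂r( h³ cos(3θ) ) − 3/h; and (iii) ∂/∂t ( G h³ sin(3θ) ) = ∂/∂r( (∂/∂r (h³ sin 3θ)) / G ) − 12 G h sin(3θ). Then for all (r,t): ∂G/∂t = −3 G sin²(3θ)/h² − 9 (∂θ/∂r)²/G and ∂θ/∂t = (∂²θ/∂r²)/G² + 6 (∂θ/∂r) cos(3θ)/(h G) − (∂θ/∂r)(∂G/∂r)/G³ − 2 sin(3θ) cos(3θ)/h². -/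
open Real

set_option maxHeartbeats 1000000

lemma mixed_deriv_comm {F : ℝ × ℝ → ℝ} {U : Set (ℝ × ℝ)} (hU : IsOpen U)
    (hF : ContDiffOn ℝ 2 F U) {p : ℝ × ℝ} (hp : p ∈ U) :
    deriv (fun y => deriv (fun x => F (x, y)) p.1) p.2
      = deriv (fun x => deriv (fun y => F (x, y)) p.2) p.1 := by
  have hFat : ∀ q ∈ U, ContDiffAt ℝ 2 F q := fun q hq => hF.contDiffAt (hU.mem_nhds hq)
  have hF' : ∀ q ∈ U, HasFDerivAt F (fderiv ℝ F q) q := fun q hq =>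
    ((hFat q hq).differentiableAt (by norm_num)).hasFDerivAt
  have hf'd : HasFDerivAt (fderiv ℝ F) (fderiv ℝ (fderiv ℝ F) p) p := by
    have h1 : ContDiffAt ℝ 1 (fderiv ℝ F) p :=
      (hFat p hp).fderiv_right (by norm_num)
    exact (h1.differentiableAt one_ne_zero).hasFDerivAt
  set f'' := fderiv ℝ (fderiv ℝ F) p with hf''
  have hsymm : ∀ v w, f'' v w = f'' w v := by
    have hev : ∀ᶠ q in nhds p, HasFDerivAt F (fderiv ℝ F q) q := by
      filter_upwards [hU.mem_nhds hp] with q hq using hF' q hq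
    exact second_derivative_symmetric_of_eventually hev hf'd
  -- slice derivatives
  have hd1 : ∀ q ∈ U, HasDerivAt (fun x => F (x, q.2)) (fderiv ℝ F q (1, 0)) q.1 := by
    intro q hq
    have hline : HasDerivAt (fun x : ℝ => (x, q.2)) ((1 : ℝ), (0 : ℝ)) q.1 :=
      (hasDerivAt_id q.1).prodMk (hasDerivAt_const q.1 q.2)
    have := (hF' q hq).comp_hasDerivAt q.1 (by simpa using hline)
    exact this
  have hd2 : ∀ q ∈ U, HasDerivAt (fun y => F (q.1, y)) (fderiv ℝ F q (0, 1)) q.2 := by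
    intro q hq
    have hline : HasDerivAt (fun y : ℝ => (q.1, y)) ((0 : ℝ), (1 : ℝ)) q.2 :=
      (hasDerivAt_const q.2 q.1).prodMk (hasDerivAt_id q.2)
    have := (hF' q hq).comp_hasDerivAt q.2 (by simpa using hline)
    exact this
  have hmem1 : ∀ᶠ y in nhds p.2, (p.1, y) ∈ U := by
    have : Continuous (fun y : ℝ => (p.1, y)) := by fun_prop
    have := this.continuousAt (x := p.2)
    exact this.eventually_mem (hU.mem_nhds (by simpa using hp))
  have hmem2 : ∀ᶠ x in nhds p.1, (x, p.2) ∈ U := by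
    have : Continuous (fun x : ℝ => (x, p.2)) := by fun_prop
    exact (this.continuousAt (x := p.1)).eventually_mem (hU.mem_nhds (by simpa using hp))
  have hL : deriv (fun y => deriv (fun x => F (x, y)) p.1) p.2
      = deriv (fun y => fderiv ℝ F (p.1, y) (1, 0)) p.2 := by
    apply Filter.EventuallyEq.deriv_eq
    filter_upwards [hmem1] with y hy
    exact (hd1 (p.1, y) hy).deriv
  have hR : deriv (fun x => deriv (fun y => F (x, y)) p.2) p.1
      = deriv (fun x => fderiv ℝ F (x, p.2) (0, 1)) p.1 := by
    apply Filter.EventuallyEq.deriv_eq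
    filter_upwards [hmem2] with x hx
    exact (hd2 (x, p.2) hx).deriv
  have hD1 : HasDerivAt (fun y => fderiv ℝ F (p.1, y) (1, 0)) (f'' (0, 1) (1, 0)) p.2 := by
    have hline : HasDerivAt (fun y : ℝ => (p.1, y)) ((0 : ℝ), (1 : ℝ)) p.2 :=
      (hasDerivAt_const p.2 p.1).prodMk (hasDerivAt_id p.2)
    have h1 : HasDerivAt (fun y => fderiv ℝ F (p.1, y)) (f'' (0, 1)) p.2 := by
      have := hf'd.comp_hasDerivAt p.2 (by simpa using hline)
      exact this
    have := ((ContinuousLinearMap.apply ℝ ℝ ((1:ℝ), (0:ℝ))).hasFDerivAt).comp_hasDerivAt p.2 h1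
    exact this
  have hD2 : HasDerivAt (fun x => fderiv ℝ F (x, p.2) (0, 1)) (f'' (1, 0) (0, 1)) p.1 := by
    have hline : HasDerivAt (fun x : ℝ => (x, p.2)) ((1 : ℝ), (0 : ℝ)) p.1 :=
      (hasDerivAt_id p.1).prodMk (hasDerivAt_const p.1 p.2)
    have h1 : HasDerivAt (fun x => fderiv ℝ F (x, p.2)) (f'' (1, 0)) p.1 := by
      have := hf'd.comp_hasDerivAt p.1 (by simpa using hline)
      exact this
    have := ((ContinuousLinearMap.apply ℝ ℝ ((0:ℝ), (1:ℝ))).hasFDerivAt).comp_hasDerivAt p.1 h1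
    exact this
  rw [hL, hR, hD1.deriv, hD2.deriv, hsymm]

/-- Reduction of the Laplacian coflow of a coclosed G₂-structure over a nearly
Kähler 6-manifold to scalar PDEs for the warping functions `h`, `θ` and
the metric coefficient `G`: the coclosed condition (i) `∂ᵣh = G cos 3θ`,
the `ω²/2`-component equation (ii), and the imaginary part (iii) of the
`dr∧Ω`-component equation imply the stated evolution equations for `G` and `θ`. -/
theorem nk_coflow_evolution_equations
    (a b : ℝ) (G h θ : ℝ → ℝ → ℝ)
    (J : Set ℝ) (hJ : J = Set.Ioo a b)
    (hGsmooth : ContDiffOn ℝ 2 (fun p : ℝ × ℝ => G p.1 p.2) (Set.univ ×ˢ J))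
    (hhsmooth : ContDiffOn ℝ 2 (fun p : ℝ × ℝ => h p.1 p.2) (Set.univ ×ˢ J))
    (hθsmooth : ContDiffOn ℝ 2 (fun p : ℝ × ℝ => θ p.1 p.2) (Set.univ ×ˢ J))
    (hGr : ∀ t ∈ J, ContDiff ℝ 3 (fun r : ℝ => G r t))
    (hhr : ∀ t ∈ J, ContDiff ℝ 3 (fun r : ℝ => h r t))
    (hθr : ∀ t ∈ J, ContDiff ℝ 3 (fun r : ℝ => θ r t))
    (hGpos : ∀ r : ℝ, ∀ t ∈ J, 0 < G r t)
    (hhpos : ∀ r : ℝ, ∀ t ∈ J, 0 < h r t)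
    -- (i) the coclosed condition τ₁ = 0:
    (hi : ∀ r : ℝ, ∀ t ∈ J,
      deriv (fun ρ : ℝ => h ρ t) r = G r t * Real.cos (3 * θ r t))
    -- (ii) the ω²/2-component of the coflow equation:
    (hii : ∀ r : ℝ, ∀ t ∈ J,
      deriv (fun s : ℝ => h r s) t
        = (1 / (G r t * (h r t) ^ 3))
            * deriv (fun ρ : ℝ => (h ρ t) ^ 3 * Real.cos (3 * θ ρ t)) r
          - 3 / h r t)
    -- (iii) the imaginary part of the dr∧Ω-component of the coflow equation:
    (hiii : ∀ r : ℝ, ∀ t ∈ J,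
      deriv (fun s : ℝ => G r s * (h r s) ^ 3 * Real.sin (3 * θ r s)) t
        = deriv (fun ρ : ℝ =>
            deriv (fun σ : ℝ => (h σ t) ^ 3 * Real.sin (3 * θ σ t)) ρ / G ρ t) r
          - 12 * G r t * h r t * Real.sin (3 * θ r t)) :
    ∀ r : ℝ, ∀ t ∈ J,
      deriv (fun s : ℝ => G r s) t
        = -3 * G r t * (Real.sin (3 * θ r t)) ^ 2 / (h r t) ^ 2
          - 9 * (deriv (fun ρ : ℝ => θ ρ t) r) ^ 2 / G r t ∧
      deriv (fun s : ℝ => θ r s) t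
        = deriv (deriv (fun ρ : ℝ => θ ρ t)) r / (G r t) ^ 2
          + 6 * deriv (fun ρ : ℝ => θ ρ t) r * Real.cos (3 * θ r t) / (h r t * G r t)
          - deriv (fun ρ : ℝ => θ ρ t) r * deriv (fun ρ : ℝ => G ρ t) r / (G r t) ^ 3
          - 2 * Real.sin (3 * θ r t) * Real.cos (3 * θ r t) / (h r t) ^ 2 := by
  intro r t ht
  have hJo : IsOpen J := by rw [hJ]; exact isOpen_Ioo
  have hUo : IsOpen ((Set.univ : Set ℝ) ×ˢ J) := isOpen_univ.prod hJo
  have hGne : ∀ ρ, G ρ t ≠ 0 := fun ρ => (hGpos ρ t ht).ne'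
  have hhne : ∀ ρ, h ρ t ≠ 0 := fun ρ => (hhpos ρ t ht).ne'
  -- r-direction derivative facts at the fixed time t
  have hθd : ∀ ρ, HasDerivAt (fun x => θ x t) (deriv (fun x => θ x t) ρ) ρ :=
    fun ρ => (((hθr t ht).differentiable (by norm_num)) ρ).hasDerivAt
  have hθ'C : ContDiff ℝ 2 (deriv (fun x => θ x t)) := by
    have h3 := hθr t ht
    rw [show (3 : WithTop ℕ∞) = 2 + 1 by norm_num] at h3
    exact (contDiff_succ_iff_deriv.mp h3).2.2
  have hθd2 : ∀ ρ, HasDerivAt (deriv (fun x => θ x t)) (deriv (deriv (fun x => θ x t)) ρ) ρ :=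
    fun ρ => ((hθ'C.differentiable (by norm_num)) ρ).hasDerivAt
  have hGd : ∀ ρ, HasDerivAt (fun x => G x t) (deriv (fun x => G x t) ρ) ρ :=
    fun ρ => (((hGr t ht).differentiable (by norm_num)) ρ).hasDerivAt
  have hhd : ∀ ρ, HasDerivAt (fun x => h x t) (G ρ t * Real.cos (3 * θ ρ t)) ρ := by
    intro ρ
    have := (((hhr t ht).differentiable (by norm_num)) ρ).hasDerivAt
    rwa [hi ρ t ht] at this
  have hsind : ∀ ρ, HasDerivAt (fun x => Real.sin (3 * θ x t))
      (Real.cos (3 * θ ρ t) * (3 * deriv (fun x => θ x t) ρ)) ρ := fun ρ =>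
    (Real.hasDerivAt_sin _).comp ρ ((hθd ρ).const_mul 3)
  have hcosd : ∀ ρ, HasDerivAt (fun x => Real.cos (3 * θ x t))
      (-Real.sin (3 * θ ρ t) * (3 * deriv (fun x => θ x t) ρ)) ρ := fun ρ =>
    (Real.hasDerivAt_cos _).comp ρ ((hθd ρ).const_mul 3)
  -- t-direction derivative facts at the fixed point r
  have hsliceC : ∀ (f : ℝ → ℝ → ℝ), ContDiffOn ℝ 2 (fun p : ℝ × ℝ => f p.1 p.2) (Set.univ ×ˢ J) →
      ∀ ρ, ContDiffAt ℝ 2 (fun s => f ρ s) t := by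
    intro f hf ρ
    have hmem : ((ρ, t) : ℝ × ℝ) ∈ (Set.univ : Set ℝ) ×ˢ J := ⟨trivial, ht⟩
    have h1 := hf.contDiffAt (hUo.mem_nhds hmem)
    exact h1.comp t (ContDiffAt.prodMk contDiffAt_const contDiffAt_id)
  have hhtd : HasDerivAt (fun s => h r s) (deriv (fun s => h r s) t) t :=
    (((hsliceC h hhsmooth r).differentiableAt (by norm_num)).hasDerivAt)
  have hGtd : HasDerivAt (fun s => G r s) (deriv (fun s => G r s) t) t :=
    (((hsliceC G hGsmooth r).differentiableAt (by norm_num)).hasDerivAt)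
  have hθtd : HasDerivAt (fun s => θ r s) (deriv (fun s => θ r s) t) t :=
    (((hsliceC θ hθsmooth r).differentiableAt (by norm_num)).hasDerivAt)
  have hsintd : HasDerivAt (fun s => Real.sin (3 * θ r s))
      (Real.cos (3 * θ r t) * (3 * deriv (fun s => θ r s) t)) t :=
    (Real.hasDerivAt_sin _).comp t (hθtd.const_mul 3)
  have hcostd : HasDerivAt (fun s => Real.cos (3 * θ r s))
      (-Real.sin (3 * θ r t) * (3 * deriv (fun s => θ r s) t)) t :=
    (Real.hasDerivAt_cos _).comp t (hθtd.const_mul 3)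
  -- (ii)  simplified:  h_t = -3 sin² / h - 3 θ_r sin / G   (for every ρ)
  have F2 : ∀ ρ, deriv (fun s => h ρ s) t
      = -3 * Real.sin (3 * θ ρ t) ^ 2 / h ρ t
        - 3 * deriv (fun x => θ x t) ρ * Real.sin (3 * θ ρ t) / G ρ t := by
    intro ρ
    have hD : deriv (fun x => (h x t) ^ 3 * Real.cos (3 * θ x t)) ρ
        = 3 * (h ρ t) ^ 2 * (G ρ t * Real.cos (3 * θ ρ t)) * Real.cos (3 * θ ρ t)
          + (h ρ t) ^ 3 * (-Real.sin (3 * θ ρ t) * (3 * deriv (fun x => θ x t) ρ)) := by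
      have := (((hhd ρ).pow 3).mul (hcosd ρ)).deriv
      exact this.trans (by norm_num)
    rw [hii ρ t ht, hD]
    have hpy := Real.sin_sq_add_cos_sq (3 * θ ρ t)
    field_simp [hhne ρ, hGne ρ]
    linear_combination (G ρ t) * hpy
  -- Schwarz / mixed partials for h
  have hschwarz : deriv (fun y => deriv (fun x => h x y) r) t
      = deriv (fun x => deriv (fun y => h x y) t) r :=
    mixed_deriv_comm hUo hhsmooth (p := (r, t)) ⟨trivial, ht⟩
  have hLA : deriv (fun y => deriv (fun x => h x y) r) t
      = deriv (fun s => G r s) t * Real.cos (3 * θ r t)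
        + G r t * (-Real.sin (3 * θ r t) * (3 * deriv (fun s => θ r s) t)) := by
    have hEq : (fun y => deriv (fun x => h x y) r) =ᶠ[nhds t]
        (fun y => G r y * Real.cos (3 * θ r y)) := by
      filter_upwards [hJo.mem_nhds ht] with y hy
      exact hi r y hy
    rw [hEq.deriv_eq]
    exact (hGtd.mul hcostd).deriv
  have hfunA : (fun x => deriv (fun y => h x y) t)
      = (fun x => -3 * Real.sin (3 * θ x t) ^ 2 / h x t
          - 3 * deriv (fun x => θ x t) x * Real.sin (3 * θ x t) / G x t) := funext F2
  have eA : deriv (fun s => G r s) t * Real.cos (3 * θ r t)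
        - 3 * G r t * Real.sin (3 * θ r t) * deriv (fun s => θ r s) t
      = -18 * deriv (fun x => θ x t) r * Real.sin (3 * θ r t) * Real.cos (3 * θ r t) / h r t
        + 3 * G r t * Real.sin (3 * θ r t) ^ 2 * Real.cos (3 * θ r t) / h r t ^ 2
        - 3 * deriv (deriv (fun x => θ x t)) r * Real.sin (3 * θ r t) / G r t
        - 9 * (deriv (fun x => θ x t) r) ^ 2 * Real.cos (3 * θ r t) / G r t
        + 3 * deriv (fun x => θ x t) r * Real.sin (3 * θ r t) * deriv (fun x => G x t) r / G r t ^ 2 := by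
    have hBIGraw := ((((hsind r).pow 2).const_mul (-3)).div (hhd r) (hhne r)).sub
      ((((hθd2 r).const_mul 3).mul (hsind r)).div (hGd r) (hGne r))
    have hBIG : HasDerivAt (fun x => -3 * Real.sin (3 * θ x t) ^ 2 / h x t
        - 3 * deriv (fun x => θ x t) x * Real.sin (3 * θ x t) / G x t)
        (-18 * deriv (fun x => θ x t) r * Real.sin (3 * θ r t) * Real.cos (3 * θ r t) / h r t
          + 3 * G r t * Real.sin (3 * θ r t) ^ 2 * Real.cos (3 * θ r t) / h r t ^ 2
          - 3 * deriv (deriv (fun x => θ x t)) r * Real.sin (3 * θ r t) / G r t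
          - 9 * (deriv (fun x => θ x t) r) ^ 2 * Real.cos (3 * θ r t) / G r t
          + 3 * deriv (fun x => θ x t) r * Real.sin (3 * θ r t) * deriv (fun x => G x t) r / G r t ^ 2) r := by
      refine hBIGraw.congr_deriv ?_
      simp only [Pi.pow_apply, Pi.mul_apply]
      field_simp [hhne r, hGne r]
      ring
    have E := hschwarz
    rw [hLA, hfunA, hBIG.deriv] at E
    linear_combination E
  -- (iii) rewritten
  have hLBd : HasDerivAt (fun s => G r s * h r s ^ 3 * Real.sin (3 * θ r s))
      (deriv (fun s => G r s) t * h r t ^ 3 * Real.sin (3 * θ r t)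
        + 3 * G r t * h r t ^ 2 * deriv (fun s => h r s) t * Real.sin (3 * θ r t)
        + 3 * G r t * h r t ^ 3 * deriv (fun s => θ r s) t * Real.cos (3 * θ r t)) t := by
    refine ((hGtd.mul (hhtd.pow 3)).mul hsintd).congr_deriv ?_
    norm_num
    ring
  have hfunB : (fun ρ => deriv (fun σ => h σ t ^ 3 * Real.sin (3 * θ σ t)) ρ / G ρ t)
      = (fun ρ => (3 * h ρ t ^ 2 * (G ρ t * Real.cos (3 * θ ρ t)) * Real.sin (3 * θ ρ t)
          + h ρ t ^ 3 * (Real.cos (3 * θ ρ t) * (3 * deriv (fun x => θ x t) ρ))) / G ρ t) := by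
    funext ρ
    congr 1
    have := (((hhd ρ).pow 3).mul (hsind ρ)).deriv
    exact this.trans (by norm_num)
  have hRBd : HasDerivAt (fun ρ => (3 * h ρ t ^ 2 * (G ρ t * Real.cos (3 * θ ρ t)) * Real.sin (3 * θ ρ t)
        + h ρ t ^ 3 * (Real.cos (3 * θ ρ t) * (3 * deriv (fun x => θ x t) ρ))) / G ρ t)
      (6 * h r t * G r t * Real.cos (3 * θ r t) ^ 2 * Real.sin (3 * θ r t)
        - 9 * h r t ^ 2 * deriv (fun x => θ x t) r * Real.sin (3 * θ r t) ^ 2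
        + 18 * h r t ^ 2 * deriv (fun x => θ x t) r * Real.cos (3 * θ r t) ^ 2
        + 3 * h r t ^ 3 * deriv (deriv (fun x => θ x t)) r * Real.cos (3 * θ r t) / G r t
        - 9 * h r t ^ 3 * (deriv (fun x => θ x t) r) ^ 2 * Real.sin (3 * θ r t) / G r t
        - 3 * h r t ^ 3 * deriv (fun x => θ x t) r * Real.cos (3 * θ r t) * deriv (fun x => G x t) r / G r t ^ 2) r := by
    have hN := (((((hhd r).pow 2).const_mul 3).mul ((hGd r).mul (hcosd r))).mul (hsind r)).add
        (((hhd r).pow 3).mul ((hcosd r).mul ((hθd2 r).const_mul 3)))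
    refine (hN.div (hGd r) (hGne r)).congr_deriv ?_
    simp only [Pi.pow_apply, Pi.mul_apply, Pi.add_apply]
    field_simp [hhne r, hGne r]
    ring
  have eB : deriv (fun s => G r s) t * Real.sin (3 * θ r t)
        + 3 * G r t * Real.cos (3 * θ r t) * deriv (fun s => θ r s) t
      = (6 * G r t * Real.cos (3 * θ r t) ^ 2 * Real.sin (3 * θ r t)
          + 9 * G r t * Real.sin (3 * θ r t) ^ 3 - 12 * G r t * Real.sin (3 * θ r t)) / h r t ^ 2
        + 18 * deriv (fun x => θ x t) r * Real.cos (3 * θ r t) ^ 2 / h r t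
        + 3 * deriv (deriv (fun x => θ x t)) r * Real.cos (3 * θ r t) / G r t
        - 9 * (deriv (fun x => θ x t) r) ^ 2 * Real.sin (3 * θ r t) / G r t
        - 3 * deriv (fun x => θ x t) r * Real.cos (3 * θ r t) * deriv (fun x => G x t) r / G r t ^ 2 := by
    have E := hiii r t ht
    rw [hfunB, hRBd.deriv, hLBd.deriv, F2 r] at E
    field_simp [hhne r, hGne r] at E ⊢
    apply mul_left_cancel₀ (hhne r)
    linear_combination (h r t) * E
  have hpy : Real.sin (3 * θ r t) ^ 2 + Real.cos (3 * θ r t) ^ 2 = 1 :=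
    Real.sin_sq_add_cos_sq (3 * θ r t)
  have eA2 : (deriv (fun s => G r s) t * Real.cos (3 * θ r t)
        - 3 * G r t * Real.sin (3 * θ r t) * deriv (fun s => θ r s) t) * (h r t ^ 3 * G r t ^ 4)
      = -18 * deriv (fun x => θ x t) r * Real.sin (3 * θ r t) * Real.cos (3 * θ r t) * h r t ^ 2 * G r t ^ 4
        + 3 * Real.sin (3 * θ r t) ^ 2 * Real.cos (3 * θ r t) * h r t * G r t ^ 5
        - 3 * deriv (deriv (fun x => θ x t)) r * Real.sin (3 * θ r t) * h r t ^ 3 * G r t ^ 3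
        - 9 * (deriv (fun x => θ x t) r) ^ 2 * Real.cos (3 * θ r t) * h r t ^ 3 * G r t ^ 3
        + 3 * deriv (fun x => θ x t) r * Real.sin (3 * θ r t) * deriv (fun x => G x t) r * h r t ^ 3 * G r t ^ 2 := by
    field_simp [hhne r, hGne r] at eA
    linear_combination (h r t * G r t ^ 2) * eA
  have eB2 : (deriv (fun s => G r s) t * Real.sin (3 * θ r t)
        + 3 * G r t * Real.cos (3 * θ r t) * deriv (fun s => θ r s) t) * (h r t ^ 3 * G r t ^ 4)
      = (6 * G r t * Real.cos (3 * θ r t) ^ 2 * Real.sin (3 * θ r t)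
          + 9 * G r t * Real.sin (3 * θ r t) ^ 3 - 12 * G r t * Real.sin (3 * θ r t)) * h r t * G r t ^ 4
        + 18 * deriv (fun x => θ x t) r * Real.cos (3 * θ r t) ^ 2 * h r t ^ 2 * G r t ^ 4
        + 3 * deriv (deriv (fun x => θ x t)) r * Real.cos (3 * θ r t) * h r t ^ 3 * G r t ^ 3
        - 9 * (deriv (fun x => θ x t) r) ^ 2 * Real.sin (3 * θ r t) * h r t ^ 3 * G r t ^ 3
        - 3 * deriv (fun x => θ x t) r * Real.cos (3 * θ r t) * deriv (fun x => G x t) r * h r t ^ 3 * G r t ^ 2 := by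
    field_simp [hhne r, hGne r] at eB
    linear_combination (h r t * G r t ^ 2) * eB
  constructor
  · field_simp [hhne r, hGne r]
    apply mul_left_cancel₀ (show h r t * G r t ^ 3 ≠ 0 by simp [hhne r, hGne r])
    linear_combination Real.cos (3 * θ r t) * eA2 + Real.sin (3 * θ r t) * eB2
      + (-(deriv (fun s => G r s) t) * h r t ^ 3 * G r t ^ 4
         - 9 * (deriv (fun x => θ x t) r) ^ 2 * h r t ^ 3 * G r t ^ 3
         + 9 * Real.sin (3 * θ r t) ^ 2 * h r t * G r t ^ 5) * hpy
  · field_simp [hhne r, hGne r]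
    apply mul_left_cancel₀ (show h r t * G r t ^ 3 ≠ 0 by simp [hhne r, hGne r])
    linear_combination (G r t * Real.cos (3 * θ r t) / 3) * eB2
      - (G r t * Real.sin (3 * θ r t) / 3) * eA2
      + (-(deriv (fun s => θ r s) t) * h r t ^ 3 * G r t ^ 6
         + 2 * Real.sin (3 * θ r t) * Real.cos (3 * θ r t) * h r t * G r t ^ 6
         + 6 * deriv (fun x => θ x t) r * Real.cos (3 * θ r t) * h r t ^ 2 * G r t ^ 5
         + deriv (deriv (fun x => θ x t)) r * h r t ^ 3 * G r t ^ 4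
         - deriv (fun x => θ x t) r * deriv (fun x => G x t) r * h r t ^ 3 * G r t ^ 3) * hpy
end

section
/- Let J ⊆ ℝ be an open interval and let G, h, θ : ℝ × J → ℝ be C² functions with G > 0 and h > 0. Suppose for all (r,t): ∂h/∂r = G·cos(3θ) and ∂h/∂t = (1/(G h³))·∂/∂r( h³ cos(3θ) ) − 3/h. Then for all (r,t): ∂/∂t ( G h³ cos(3θ) ) = ∂/∂r ( (∂/∂r (h³ cos 3θ))/G − 3 h² ). -/
open Real

/-- Redundancy in the derivation of the nearly Kähler coflow equations: given
the coclosed condition `∂ᵣh = G cos 3θ` and the `ω²/2`-component evolution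
equation for `h`, the real part of the complex evolution equation
`∂ₜ(G h³ cos 3θ) = ∂ᵣ((∂ᵣ(h³ cos 3θ))/G - 3h²)` follows. -/
theorem nk_coflow_real_part_redundant
    (a b : ℝ) (G h θ : ℝ → ℝ → ℝ)
    (J : Set ℝ) (hJ : J = Set.Ioo a b)
    (hGsmooth : ContDiffOn ℝ 2 (fun p : ℝ × ℝ => G p.1 p.2) (Set.univ ×ˢ J))
    (hhsmooth : ContDiffOn ℝ 2 (fun p : ℝ × ℝ => h p.1 p.2) (Set.univ ×ˢ J))
    (hθsmooth : ContDiffOn ℝ 2 (fun p : ℝ × ℝ => θ p.1 p.2) (Set.univ ×ˢ J))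
    (hGpos : ∀ r : ℝ, ∀ t ∈ J, 0 < G r t)
    (hhpos : ∀ r : ℝ, ∀ t ∈ J, 0 < h r t)
    (hi : ∀ r : ℝ, ∀ t ∈ J,
      deriv (fun ρ : ℝ => h ρ t) r = G r t * Real.cos (3 * θ r t))
    (hii : ∀ r : ℝ, ∀ t ∈ J,
      deriv (fun s : ℝ => h r s) t
        = (1 / (G r t * (h r t) ^ 3))
            * deriv (fun ρ : ℝ => (h ρ t) ^ 3 * Real.cos (3 * θ ρ t)) r
          - 3 / h r t) :
    ∀ r : ℝ, ∀ t ∈ J,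
      deriv (fun s : ℝ => G r s * (h r s) ^ 3 * Real.cos (3 * θ r s)) t
        = deriv (fun ρ : ℝ =>
            deriv (fun σ : ℝ => (h σ t) ^ 3 * Real.cos (3 * θ σ t)) ρ / G ρ t
              - 3 * (h ρ t) ^ 2) r := by
  intro r t ht
  -- the open domain
  set U : Set (ℝ × ℝ) := Set.univ ×ˢ J with hUdef
  have hJopen : IsOpen J := by rw [hJ]; exact isOpen_Ioo
  have hU : IsOpen U := isOpen_univ.prod hJopen
  have hmemU : ∀ (ρ : ℝ), ∀ s ∈ J, (ρ, s) ∈ U := fun ρ s hs => ⟨trivial, hs⟩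
  -- the potential F = h^4 / 4
  set F : ℝ × ℝ → ℝ := fun p => (h p.1 p.2) ^ 4 / 4 with hFdef
  have hF : ContDiffOn ℝ 2 F U := (hhsmooth.pow 4).div_const 4
  have hFdiff : ∀ p ∈ U, HasFDerivAt F (fderiv ℝ F p) p := by
    intro p hp
    exact ((hF.differentiableOn (by norm_num)).differentiableAt
      (hU.mem_nhds hp)).hasFDerivAt
  have hF1 : ContDiffOn ℝ 1 (fderiv ℝ F) U := by
    refine hF.fderiv_of_isOpen hU ?_
    norm_num
  have hF1diff : ∀ p ∈ U, DifferentiableAt ℝ (fderiv ℝ F) p := fun p hp =>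
    (hF1.differentiableOn (by norm_num)).differentiableAt (hU.mem_nhds hp)
  -- differentiability of h along lines
  have hhdiffAt : ∀ (ρ : ℝ), ∀ s ∈ J,
      DifferentiableAt ℝ (fun p : ℝ × ℝ => h p.1 p.2) (ρ, s) := fun ρ s hs =>
    (hhsmooth.differentiableOn (by norm_num)).differentiableAt
      (hU.mem_nhds (hmemU ρ s hs))
  have hhr : ∀ (ρ : ℝ), ∀ s ∈ J,
      HasDerivAt (fun x : ℝ => h x s) (G ρ s * Real.cos (3 * θ ρ s)) ρ := by
    intro ρ s hs
    have hd : DifferentiableAt ℝ (fun x : ℝ => h x s) ρ :=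
      by have := (hhdiffAt ρ s hs).comp ρ ((differentiableAt_id (𝕜 := ℝ) (x := ρ)).prodMk (differentiableAt_const s)); exact this
    have := hd.hasDerivAt
    rwa [hi ρ s hs] at this
  have hht : ∀ (ρ : ℝ), ∀ s ∈ J,
      HasDerivAt (fun x : ℝ => h ρ x) (deriv (fun x : ℝ => h ρ x) s) s := by
    intro ρ s hs
    have hd : DifferentiableAt ℝ (fun x : ℝ => h ρ x) s :=
      (hhdiffAt ρ s hs).comp s ((differentiableAt_const ρ).prodMk differentiableAt_id)
    exact hd.hasDerivAt
  -- partial derivatives of F along lines, via the full derivative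
  have keyr : ∀ (ρ : ℝ), ∀ s ∈ J,
      HasDerivAt (fun x : ℝ => F (x, s)) (fderiv ℝ F (ρ, s) (1, 0)) ρ := by
    intro ρ s hs
    have hline : HasDerivAt (fun x : ℝ => ((x, s) : ℝ × ℝ)) (1, 0) ρ :=
      (hasDerivAt_id ρ).prodMk (hasDerivAt_const ρ s)
    exact (hFdiff _ (hmemU ρ s hs)).comp_hasDerivAt ρ hline
  have keyt : ∀ (ρ : ℝ), ∀ s ∈ J,
      HasDerivAt (fun x : ℝ => F (ρ, x)) (fderiv ℝ F (ρ, s) (0, 1)) s := by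
    intro ρ s hs
    have hline : HasDerivAt (fun x : ℝ => ((ρ, x) : ℝ × ℝ)) (0, 1) s :=
      (hasDerivAt_const s ρ).prodMk (hasDerivAt_id s)
    exact (hFdiff _ (hmemU ρ s hs)).comp_hasDerivAt s hline
  -- identification of the partial derivatives
  have eqr : ∀ (ρ : ℝ), ∀ s ∈ J,
      fderiv ℝ F (ρ, s) (1, 0) = G ρ s * (h ρ s) ^ 3 * Real.cos (3 * θ ρ s) := by
    intro ρ s hs
    have h1 : HasDerivAt (fun x : ℝ => F (x, s))
        (4 * h ρ s ^ 3 * (G ρ s * Real.cos (3 * θ ρ s)) / 4) ρ := by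
      simpa [hFdef] using (((hhr ρ s hs).pow 4).div_const 4)
    have := (keyr ρ s hs).unique h1
    rw [this]; ring
  have eqt : ∀ (ρ : ℝ), ∀ s ∈ J,
      fderiv ℝ F (ρ, s) (0, 1)
        = deriv (fun σ : ℝ => (h σ s) ^ 3 * Real.cos (3 * θ σ s)) ρ / G ρ s
          - 3 * (h ρ s) ^ 2 := by
    intro ρ s hs
    have h1 : HasDerivAt (fun x : ℝ => F (ρ, x))
        (4 * h ρ s ^ 3 * deriv (fun x : ℝ => h ρ x) s / 4) s := by
      simpa [hFdef] using (((hht ρ s hs).pow 4).div_const 4)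
    have h2 := (keyt ρ s hs).unique h1
    rw [h2, hii ρ s hs]
    have hG := (hGpos ρ s hs).ne'
    have hh := (hhpos ρ s hs).ne'
    field_simp
  -- mixed second partials via the second derivative of F
  have hp : (r, t) ∈ U := hmemU r t ht
  set f'' := fderiv ℝ (fderiv ℝ F) (r, t) with hf''def
  have hf'' : HasFDerivAt (fderiv ℝ F) f'' (r, t) := (hF1diff _ hp).hasFDerivAt
  have hsymm : ∀ v w : ℝ × ℝ, f'' v w = f'' w v := by
    intro v w
    refine second_derivative_symmetric_of_eventually (f := F) ?_ hf'' v w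
    filter_upwards [hU.mem_nhds hp] with q hq using hFdiff q hq
  -- t-derivative of the r-partial
  have hDr : HasDerivAt (fun s : ℝ => fderiv ℝ F (r, s)) (f'' (0, 1)) t := by
    have hline : HasDerivAt (fun x : ℝ => ((r, x) : ℝ × ℝ)) (0, 1) t :=
      (hasDerivAt_const t r).prodMk (hasDerivAt_id t)
    exact hf''.comp_hasDerivAt t hline
  have hDr1 : HasDerivAt (fun s : ℝ => fderiv ℝ F (r, s) ((1 : ℝ), (0 : ℝ)))
      (f'' (0, 1) (1, 0)) t := by
    have := ((ContinuousLinearMap.apply ℝ ℝ ((1 : ℝ), (0 : ℝ))).hasFDerivAt).comp_hasDerivAt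
      t hDr
    exact this
  -- r-derivative of the t-partial
  have hDt : HasDerivAt (fun ρ : ℝ => fderiv ℝ F (ρ, t)) (f'' (1, 0)) r := by
    have hline : HasDerivAt (fun x : ℝ => ((x, t) : ℝ × ℝ)) (1, 0) r :=
      (hasDerivAt_id r).prodMk (hasDerivAt_const r t)
    exact hf''.comp_hasDerivAt r hline
  have hDt1 : HasDerivAt (fun ρ : ℝ => fderiv ℝ F (ρ, t) ((0 : ℝ), (1 : ℝ)))
      (f'' (1, 0) (0, 1)) r := by
    have := ((ContinuousLinearMap.apply ℝ ℝ ((0 : ℝ), (1 : ℝ))).hasFDerivAt).comp_hasDerivAt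
      r hDt
    exact this
  -- compute the LHS
  have hLHS : deriv (fun s : ℝ => G r s * (h r s) ^ 3 * Real.cos (3 * θ r s)) t
      = f'' (0, 1) (1, 0) := by
    have heq : (fun s : ℝ => G r s * (h r s) ^ 3 * Real.cos (3 * θ r s))
        =ᶠ[nhds t] (fun s : ℝ => fderiv ℝ F (r, s) ((1 : ℝ), (0 : ℝ))) := by
      filter_upwards [hJopen.mem_nhds ht] with s hs using (eqr r s hs).symm
    rw [heq.deriv_eq, hDr1.deriv]
  -- compute the RHS
  have hRHS : deriv (fun ρ : ℝ =>
        deriv (fun σ : ℝ => (h σ t) ^ 3 * Real.cos (3 * θ σ t)) ρ / G ρ t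
          - 3 * (h ρ t) ^ 2) r = f'' (1, 0) (0, 1) := by
    have heq : (fun ρ : ℝ =>
        deriv (fun σ : ℝ => (h σ t) ^ 3 * Real.cos (3 * θ σ t)) ρ / G ρ t
          - 3 * (h ρ t) ^ 2)
        = (fun ρ : ℝ => fderiv ℝ F (ρ, t) ((0 : ℝ), (1 : ℝ))) := by
      funext ρ
      exact (eqt ρ t ht).symm
    rw [heq, hDt1.deriv]
  rw [hLHS, hRHS, hsymm]
end

section
/- Fix λ, b ∈ ℝ and let I = {r ∈ ℝ : r + b > 0}. Define h(r) = r + b, θ(r) = 0, and let k be an antiderivative of s(r) = −(λ/4)(r + b) on I. Then h > 0 on I and the triple (h, θ, k) satisfies on I: (E1) h' = cos(3θ); (E2) (h³ sin 3θ)'' − 12 h sin 3θ − λ h³ sin 3θ − (k' h³ sin 3θ)' = 0; (E3) (h³ cos 3θ)' − 3h² − (λ/4) h⁴ − k' h³ cos 3θ = 0. -/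
open Real

/-- The family of nearly Kähler soliton solutions with `3θ = 0`:
`h(r) = r + b`, `θ = 0`, `k' = -(λ/4)(r + b)`, on the interval where
`r + b > 0`, satisfies (E1), (E2), (E3). -/
theorem nk_soliton_cone_family
    (lam b : ℝ) (h θ k : ℝ → ℝ)
    (I : Set ℝ) (hI : I = {r : ℝ | 0 < r + b})
    (hh : ∀ r : ℝ, h r = r + b)
    (hθ : ∀ r : ℝ, θ r = 0)
    (hk : ∀ r ∈ I, HasDerivAt k (-(lam / 4) * (r + b)) r) :
    (∀ r ∈ I, 0 < h r) ∧
    (∀ r ∈ I, deriv h r = Real.cos (3 * θ r)) ∧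
    (∀ r ∈ I,
      deriv (deriv (fun x => (h x) ^ 3 * Real.sin (3 * θ x))) r
        - 12 * h r * Real.sin (3 * θ r) - lam * (h r) ^ 3 * Real.sin (3 * θ r)
        - deriv (fun x => deriv k x * (h x) ^ 3 * Real.sin (3 * θ x)) r = 0) ∧
    (∀ r ∈ I,
      deriv (fun x => (h x) ^ 3 * Real.cos (3 * θ x)) r
        - 3 * (h r) ^ 2 - (lam / 4) * (h r) ^ 4
        - deriv k r * (h r) ^ 3 * Real.cos (3 * θ r) = 0) := by
  have hzero : ∀ r : ℝ, Real.sin (3 * θ r) = 0 := by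
    intro r; rw [hθ r]; simp
  have hone : ∀ r : ℝ, Real.cos (3 * θ r) = 1 := by
    intro r; rw [hθ r]; simp
  have hhfun : h = fun r => r + b := funext hh
  refine ⟨?_, ?_, ?_, ?_⟩
  · intro r hr; rw [hh r]; rw [hI] at hr; exact hr
  · intro r hr
    rw [hhfun, hone]
    have : HasDerivAt (fun r : ℝ => r + b) 1 r := by
      simpa using (hasDerivAt_id r).add_const b
    exact this.deriv
  · intro r hr
    have e1 : (fun x => (h x) ^ 3 * Real.sin (3 * θ x)) = fun _ => (0 : ℝ) := by
      funext x; rw [hzero x]; ring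
    have e2 : (fun x => deriv k x * (h x) ^ 3 * Real.sin (3 * θ x)) = fun _ => (0 : ℝ) := by
      funext x; rw [hzero x]; ring
    rw [e1, e2, hzero r]
    simp
  · intro r hr
    have e1 : (fun x => (h x) ^ 3 * Real.cos (3 * θ x)) = fun x => (x + b) ^ 3 := by
      funext x; rw [hone x, hh x]; ring
    have hd : HasDerivAt (fun x : ℝ => (x + b) ^ 3) (3 * (r + b) ^ 2) r := by
      have := ((hasDerivAt_id r).add_const b).pow 3
      simpa [Pi.pow_def] using this
    have hkd : deriv k r = -(lam / 4) * (r + b) := (hk r hr).deriv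
    rw [e1, hd.deriv, hkd, hh r, hone r]
    ring
end

section
/- Fix λ, b ∈ ℝ and let I = {r ∈ ℝ : b − r > 0}. Define h(r) = b − r, θ(r) = π/3, and let k be an antiderivative of s(r) = (λ/4)(b − r) on I. Then h > 0 on I and the triple (h, θ, k) satisfies on I: (E1) h' = cos(3θ); (E2) (h³ sin 3θ)'' − 12 h sin 3θ − λ h³ sin 3θ − (k' h³ sin 3θ)' = 0; (E3) (h³ cos 3θ)' − 3h² − (λ/4) h⁴ − k' h³ cos 3θ = 0. -/
open Real

/-- The family of nearly Kähler soliton solutions with `3θ = π`: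
`h(r) = b - r`, `θ = π/3`, `k' = (λ/4)(b - r)`, on the interval where
`b - r > 0`, satisfies (E1), (E2), (E3). -/
theorem nk_soliton_reverse_cone_family
    (lam b : ℝ) (h θ k : ℝ → ℝ)
    (I : Set ℝ) (hI : I = {r : ℝ | 0 < b - r})
    (hh : ∀ r : ℝ, h r = b - r)
    (hθ : ∀ r : ℝ, θ r = Real.pi / 3)
    (hk : ∀ r ∈ I, HasDerivAt k ((lam / 4) * (b - r)) r) :
    (∀ r ∈ I, 0 < h r) ∧
    (∀ r ∈ I, deriv h r = Real.cos (3 * θ r)) ∧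
    (∀ r ∈ I,
      deriv (deriv (fun x => (h x) ^ 3 * Real.sin (3 * θ x))) r
        - 12 * h r * Real.sin (3 * θ r) - lam * (h r) ^ 3 * Real.sin (3 * θ r)
        - deriv (fun x => deriv k x * (h x) ^ 3 * Real.sin (3 * θ x)) r = 0) ∧
    (∀ r ∈ I,
      deriv (fun x => (h x) ^ 3 * Real.cos (3 * θ x)) r
        - 3 * (h r) ^ 2 - (lam / 4) * (h r) ^ 4
        - deriv k r * (h r) ^ 3 * Real.cos (3 * θ r) = 0) := by
  have h3θ : ∀ r : ℝ, 3 * θ r = Real.pi := by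
    intro r; rw [hθ]; ring
  have hsin : ∀ r : ℝ, Real.sin (3 * θ r) = 0 := by
    intro r; rw [h3θ, Real.sin_pi]
  have hcos : ∀ r : ℝ, Real.cos (3 * θ r) = -1 := by
    intro r; rw [h3θ, Real.cos_pi]
  have hfun : h = fun r => b - r := funext hh
  have hderiv : ∀ r : ℝ, deriv h r = -1 := by
    intro r
    rw [hfun]
    have : HasDerivAt (fun r : ℝ => b - r) (-1) r := by
      simpa using (hasDerivAt_id r).const_sub b
    exact this.deriv
  refine ⟨?_, ?_, ?_, ?_⟩
  · intro r hr; rw [hh]; rw [hI] at hr; exact hr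
  · intro r hr; rw [hderiv, hcos]
  · intro r hr
    have e1 : (fun x => (h x) ^ 3 * Real.sin (3 * θ x)) = fun _ => (0 : ℝ) := by
      funext x; rw [hsin]; ring
    have e2 : (fun x => deriv k x * (h x) ^ 3 * Real.sin (3 * θ x)) = fun _ => (0 : ℝ) := by
      funext x; rw [hsin]; ring
    rw [e1, e2, hsin]
    simp
  · intro r hr
    have e1 : (fun x => (h x) ^ 3 * Real.cos (3 * θ x)) = fun x => -(b - x) ^ 3 := by
      funext x; rw [hcos, hh]; ring
    have d1 : HasDerivAt (fun x => -(b - x) ^ 3) (3 * (b - r) ^ 2) r := by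
      have : HasDerivAt (fun x : ℝ => b - x) (-1) r := by
        simpa using (hasDerivAt_id r).const_sub b
      have : HasDerivAt (fun x => -(b - x) ^ 3) (-(((3 : ℕ) : ℝ) * (b - r) ^ (3 - 1) * -1)) r :=
        (this.pow 3).neg
      convert this using 1
      norm_num
    have dk : deriv k r = (lam / 4) * (b - r) := (hk r hr).deriv
    rw [e1, d1.deriv, dk, hcos, hh]
    ring
end

section
/- Fix b > 0 and c ∈ ℝ, and set λ = −12/b². Define h(r) = b, θ(r) = π/6, and k(r) = c·r on ℝ. Then the triple (h, θ, k) satisfies on ℝ: (E1) h' = cos(3θ); (E2) (h³ sin 3θ)'' − 12 h sin 3θ − λ h³ sin 3θ − (k' h³ sin 3θ)' = 0; (E3) (h³ cos 3θ)' − 3h² − (λ/4) h⁴ − k' h³ cos 3θ = 0. -/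
open Real

/-- The family of shrinking nearly Kähler solitons with `3θ = π/2`:
`h = b > 0`, `θ = π/6`, `k(r) = c r`, `λ = -12/b²`, satisfies
(E1), (E2), (E3) on all of `ℝ`. -/
theorem nk_soliton_product_family
    (b c lam : ℝ) (hb : 0 < b) (hlam : lam = -12 / b ^ 2)
    (h θ k : ℝ → ℝ)
    (hh : ∀ r : ℝ, h r = b)
    (hθ : ∀ r : ℝ, θ r = Real.pi / 6)
    (hk : ∀ r : ℝ, k r = c * r) :
    (∀ r : ℝ, deriv h r = Real.cos (3 * θ r)) ∧
    (∀ r : ℝ,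
      deriv (deriv (fun x => (h x) ^ 3 * Real.sin (3 * θ x))) r
        - 12 * h r * Real.sin (3 * θ r) - lam * (h r) ^ 3 * Real.sin (3 * θ r)
        - deriv (fun x => deriv k x * (h x) ^ 3 * Real.sin (3 * θ x)) r = 0) ∧
    (∀ r : ℝ,
      deriv (fun x => (h x) ^ 3 * Real.cos (3 * θ x)) r
        - 3 * (h r) ^ 2 - (lam / 4) * (h r) ^ 4
        - deriv k r * (h r) ^ 3 * Real.cos (3 * θ r) = 0) := by
  have hb' : b ≠ 0 := ne_of_gt hb
  have hfun : h = fun _ => b := funext hh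
  have θfun : θ = fun _ => Real.pi / 6 := funext hθ
  have kfun : k = fun x => c * x := funext hk
  subst hfun θfun kfun hlam
  have h2 : (3:ℝ) * (Real.pi / 6) = Real.pi / 2 := by ring
  have hdk : deriv (fun x : ℝ => c * x) = fun _ => c := by
    funext x
    simpa using ((hasDerivAt_id x).const_mul c).deriv
  refine ⟨?_, ?_, ?_⟩ <;> intro r <;>
    simp [h2, hdk, Real.cos_pi_div_two, Real.sin_pi_div_two, deriv_const]
  all_goals field_simp
  all_goals ring
end

section
/- Set λ = −16 and let I = (0, π). Define h(r) = sin(r), θ(r) = r/3, and k(r) = 0 on I. Then h > 0 on I and the triple (h, θ, k) satisfies on I: (E1) h' = cos(3θ); (E2) (h³ sin 3θ)'' − 12 h sin 3θ − λ h³ sin 3θ − (k' h³ sin 3θ)' = 0; (E3) (h³ cos 3θ)' − 3h² − (λ/4) h⁴ − k' h³ cos 3θ = 0. -/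
open Real

private lemma sc_d1 (x : ℝ) :
    HasDerivAt (fun x => Real.sin x ^ 4) (4 * Real.sin x ^ 3 * Real.cos x) x := by
  simpa using (Real.hasDerivAt_sin x).fun_pow 4

private lemma sc_deriv1 :
    deriv (fun x => Real.sin x ^ 4) = fun x => 4 * Real.sin x ^ 3 * Real.cos x :=
  funext fun x => (sc_d1 x).deriv

private lemma sc_d2 (x : ℝ) :
    HasDerivAt (fun x => 4 * Real.sin x ^ 3 * Real.cos x)
      (12 * Real.sin x ^ 2 * Real.cos x ^ 2 - 4 * Real.sin x ^ 4) x := by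
  have := (((Real.hasDerivAt_sin x).fun_pow 3).const_mul 4).fun_mul (Real.hasDerivAt_cos x)
  refine this.congr_deriv ?_
  ring

private lemma sc_d3 (x : ℝ) :
    HasDerivAt (fun x => Real.sin x ^ 3 * Real.cos x)
      (3 * Real.sin x ^ 2 * Real.cos x ^ 2 - Real.sin x ^ 4) x := by
  have := ((Real.hasDerivAt_sin x).fun_pow 3).fun_mul (Real.hasDerivAt_cos x)
  refine this.congr_deriv ?_
  ring

/-- The sine-cone solution of the nearly Kähler soliton system: `h(r) = sin r`,
`θ(r) = r/3`, `k = 0`, `λ = -16`, on `I = (0, π)`, satisfies (E1), (E2), (E3);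
this shrinking soliton is an eigenform of its own Hodge Laplacian. -/
theorem nk_soliton_sine_cone
    (lam : ℝ) (hlam : lam = -16)
    (h θ k : ℝ → ℝ)
    (I : Set ℝ) (hI : I = Set.Ioo 0 Real.pi)
    (hh : ∀ r : ℝ, h r = Real.sin r)
    (hθ : ∀ r : ℝ, θ r = r / 3)
    (hk : ∀ r : ℝ, k r = 0) :
    (∀ r ∈ I, 0 < h r) ∧
    (∀ r ∈ I, deriv h r = Real.cos (3 * θ r)) ∧
    (∀ r ∈ I,
      deriv (deriv (fun x => (h x) ^ 3 * Real.sin (3 * θ x))) r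
        - 12 * h r * Real.sin (3 * θ r) - lam * (h r) ^ 3 * Real.sin (3 * θ r)
        - deriv (fun x => deriv k x * (h x) ^ 3 * Real.sin (3 * θ x)) r = 0) ∧
    (∀ r ∈ I,
      deriv (fun x => (h x) ^ 3 * Real.cos (3 * θ x)) r
        - 3 * (h r) ^ 2 - (lam / 4) * (h r) ^ 4
        - deriv k r * (h r) ^ 3 * Real.cos (3 * θ r) = 0) := by
  have hfun : h = Real.sin := funext hh
  have hθfun : θ = fun r => r / 3 := funext hθ
  have hkfun : k = fun _ => 0 := funext hk
  subst hfun hθfun hkfun hlam hI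
  have harg : ∀ x : ℝ, 3 * ((fun r => r / 3) x) = x := fun x => by ring
  have heq1 : (fun x => Real.sin x ^ 3 * Real.sin (3 * ((fun r : ℝ => r / 3) x)))
      = fun x => Real.sin x ^ 4 := by
    funext x; rw [harg x]; ring
  have heq2 : (fun x => Real.sin x ^ 3 * Real.cos (3 * ((fun r : ℝ => r / 3) x)))
      = fun x => Real.sin x ^ 3 * Real.cos x := by
    funext x; rw [harg x]
  refine ⟨?_, ?_, ?_, ?_⟩
  · intro r hr
    exact Real.sin_pos_of_pos_of_lt_pi hr.1 hr.2
  · intro r hr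
    simp [Real.deriv_sin, harg r]
  · intro r hr
    have hz : (fun x => deriv (fun _ : ℝ => (0:ℝ)) x * Real.sin x ^ 3 *
        Real.sin (3 * ((fun r : ℝ => r / 3) x))) = fun _ => (0:ℝ) := by
      funext x; simp
    rw [heq1, hz, sc_deriv1]
    rw [(sc_d2 r).deriv]
    have hs := Real.sin_sq_add_cos_sq r
    simp only [harg r, deriv_const']
    nlinarith [hs]
  · intro r hr
    rw [heq2, (sc_d3 r).deriv]
    have hs := Real.sin_sq_add_cos_sq r
    simp only [harg r, deriv_const']
    nlinarith [hs]
end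

section
/- Let I ⊆ ℝ be an open interval, λ ∈ ℝ, and let h, θ, k : I → ℝ be sufficiently smooth (h three times differentiable, θ twice differentiable, k twice differentiable) with h > 0, h'(r) = cos(3θ(r)) and h'(r) ≠ 0 on I. Set u(r) = sin(3θ(r)). Suppose (E2) (h³ u)'' − 12 h u − λ h³ u − (k' h³ u)' = 0 and (E3) (h³ cos 3θ)' − 3h² − (λ/4) h⁴ − k' h³ cos 3θ = 0 hold on I. Then on I: 0 = u''·h³ + u'·( 3h² h' − h³ h''/h' + 3h²/h' + λ h⁴/(4h') ) + u·( −3h² h'' − 6h − h³ h'''/h' − 3h² h''/(h')² − λ h⁴ h''/(4(h')²) + h³ (h'')²/(h')² ). -/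
open Real

/-- The intermediate second-order linear equation in `u = sin 3θ` obtained by
eliminating `k'` from (E2) of the nearly Kähler soliton system using (E3),
under the coclosed condition (E1) `h' = cos 3θ` and `h' ≠ 0`. -/
theorem nk_soliton_second_order_u_equation
    (a b lam : ℝ) (h θ k u : ℝ → ℝ)
    (I : Set ℝ) (hI : I = Set.Ioo a b)
    (hpos : ∀ r ∈ I, 0 < h r)
    (hh1 : ∀ r ∈ I, DifferentiableAt ℝ h r)
    (hh2 : ∀ r ∈ I, DifferentiableAt ℝ (deriv h) r)
    (hh3 : ∀ r ∈ I, DifferentiableAt ℝ (deriv (deriv h)) r)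
    (hθ1 : ∀ r ∈ I, DifferentiableAt ℝ θ r)
    (hθ2 : ∀ r ∈ I, DifferentiableAt ℝ (deriv θ) r)
    (hk1 : ∀ r ∈ I, DifferentiableAt ℝ k r)
    (hk2 : ∀ r ∈ I, DifferentiableAt ℝ (deriv k) r)
    (hE1 : ∀ r ∈ I, deriv h r = Real.cos (3 * θ r))
    (hne : ∀ r ∈ I, deriv h r ≠ 0)
    (hu : ∀ r : ℝ, u r = Real.sin (3 * θ r))
    (hE2 : ∀ r ∈ I,
      deriv (deriv (fun x => (h x) ^ 3 * u x)) r
        - 12 * h r * u r - lam * (h r) ^ 3 * u r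
        - deriv (fun x => deriv k x * (h x) ^ 3 * u x) r = 0)
    (hE3 : ∀ r ∈ I,
      deriv (fun x => (h x) ^ 3 * Real.cos (3 * θ x)) r
        - 3 * (h r) ^ 2 - (lam / 4) * (h r) ^ 4
        - deriv k r * (h r) ^ 3 * Real.cos (3 * θ r) = 0) :
    ∀ r ∈ I,
      0 = deriv (deriv u) r * (h r) ^ 3
        + deriv u r * (3 * (h r) ^ 2 * deriv h r
            - (h r) ^ 3 * deriv (deriv h) r / deriv h r
            + 3 * (h r) ^ 2 / deriv h r
            + lam * (h r) ^ 4 / (4 * deriv h r))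
        + u r * (-(3 * (h r) ^ 2 * deriv (deriv h) r) - 6 * h r
            - (h r) ^ 3 * deriv (deriv (deriv h)) r / deriv h r
            - 3 * (h r) ^ 2 * deriv (deriv h) r / (deriv h r) ^ 2
            - lam * (h r) ^ 4 * deriv (deriv h) r / (4 * (deriv h r) ^ 2)
            + (h r) ^ 3 * (deriv (deriv h) r) ^ 2 / (deriv h r) ^ 2) := by
  intro r hr
  have hIopen : IsOpen I := by rw [hI]; exact isOpen_Ioo
  have hmem : I ∈ nhds r := hIopen.mem_nhds hr
  have hu' : u = fun x => Real.sin (3 * θ x) := funext hu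
  -- u is differentiable on I
  have huD : ∀ x ∈ I, HasDerivAt u (Real.cos (3 * θ x) * (3 * deriv θ x)) x := by
    intro x hx
    rw [hu']
    exact ((hθ1 x hx).hasDerivAt.const_mul 3).sin
  have hudiff : ∀ x ∈ I, DifferentiableAt ℝ u x := fun x hx => (huD x hx).differentiableAt
  have hev_u : (deriv u) =ᶠ[nhds r] fun x => Real.cos (3 * θ x) * (3 * deriv θ x) :=
    Filter.eventually_of_mem hmem (fun x hx => (huD x hx).deriv)
  have hgdiff : DifferentiableAt ℝ (fun x => Real.cos (3 * θ x) * (3 * deriv θ x)) r :=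
    (((hθ1 r hr).const_mul 3).cos).mul ((hθ2 r hr).const_mul 3)
  have hud2 : DifferentiableAt ℝ (deriv u) r :=
    hgdiff.congr_of_eventuallyEq hev_u
  -- first derivative of h^3 u on I
  have hHU : ∀ x ∈ I, deriv (fun y => h y ^ 3 * u y) x
      = 3 * h x ^ 2 * deriv h x * u x + h x ^ 3 * deriv u x := by
    intro x hx
    have h1 := ((hh1 x hx).hasDerivAt.fun_pow 3).fun_mul (hudiff x hx).hasDerivAt
    rw [h1.deriv]; push_cast; ring
  have hev_hu : (deriv fun y => h y ^ 3 * u y) =ᶠ[nhds r]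
      fun x => 3 * h x ^ 2 * deriv h x * u x + h x ^ 3 * deriv u x :=
    Filter.eventually_of_mem hmem hHU
  -- second derivative of h^3 u at r
  have hD2 : HasDerivAt (fun x => 3 * h x ^ 2 * deriv h x * u x + h x ^ 3 * deriv u x)
      (6 * h r * (deriv h r) ^ 2 * u r + 3 * h r ^ 2 * deriv (deriv h) r * u r
        + 6 * h r ^ 2 * deriv h r * deriv u r + h r ^ 3 * deriv (deriv u) r) r := by
    have hA := ((((hh1 r hr).hasDerivAt.fun_pow 2).const_mul 3).fun_mul
        (hh2 r hr).hasDerivAt).fun_mul (hudiff r hr).hasDerivAt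
    have hB := ((hh1 r hr).hasDerivAt.fun_pow 3).fun_mul hud2.hasDerivAt
    refine (hA.fun_add hB).congr_deriv ?_
    push_cast; ring
  have hsecond : deriv (deriv (fun x => (h x) ^ 3 * u x)) r
      = 6 * h r * (deriv h r) ^ 2 * u r + 3 * h r ^ 2 * deriv (deriv h) r * u r
        + 6 * h r ^ 2 * deriv h r * deriv u r + h r ^ 3 * deriv (deriv u) r := by
    rw [hev_hu.deriv_eq]; exact hD2.deriv
  -- eliminate k' using E3
  have hF : ∀ x ∈ I, deriv k x * h x ^ 3 * u x
      = (3 * h x ^ 2 * (deriv h x) ^ 2 + h x ^ 3 * deriv (deriv h) x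
          - 3 * h x ^ 2 - lam / 4 * h x ^ 4) * u x / deriv h x := by
    intro x hx
    have hxmem : I ∈ nhds x := hIopen.mem_nhds hx
    have hcos : (fun y => h y ^ 3 * Real.cos (3 * θ y)) =ᶠ[nhds x]
        fun y => h y ^ 3 * deriv h y :=
      Filter.eventually_of_mem hxmem (fun y hy => by dsimp only; rw [hE1 y hy])
    have hd : deriv (fun y => h y ^ 3 * Real.cos (3 * θ y)) x
        = 3 * h x ^ 2 * (deriv h x) ^ 2 + h x ^ 3 * deriv (deriv h) x := by
      rw [hcos.deriv_eq]
      have := ((hh1 x hx).hasDerivAt.fun_pow 3).fun_mul (hh2 x hx).hasDerivAt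
      rw [this.deriv]; push_cast; ring
    have he3 := hE3 x hx
    rw [hd, ← hE1 x hx] at he3
    rw [eq_div_iff (hne x hx)]
    linear_combination (-(u x)) * he3
  have hev_k : (fun x => deriv k x * (h x) ^ 3 * u x) =ᶠ[nhds r]
      fun x => (3 * h x ^ 2 * (deriv h x) ^ 2 + h x ^ 3 * deriv (deriv h) x
          - 3 * h x ^ 2 - lam / 4 * h x ^ 4) * u x / deriv h x :=
    Filter.eventually_of_mem hmem hF
  -- derivative of the k'-free expression at r
  have hFD : HasDerivAt (fun x => 3 * h x ^ 2 * (deriv h x) ^ 2 + h x ^ 3 * deriv (deriv h) x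
          - 3 * h x ^ 2 - lam / 4 * h x ^ 4)
      (6 * h r * (deriv h r) ^ 3 + 9 * h r ^ 2 * deriv h r * deriv (deriv h) r
        + h r ^ 3 * deriv (deriv (deriv h)) r - 6 * h r * deriv h r
        - lam * h r ^ 3 * deriv h r) r := by
    have t1 := (((hh1 r hr).hasDerivAt.fun_pow 2).const_mul 3).fun_mul ((hh2 r hr).hasDerivAt.fun_pow 2)
    have t2 := ((hh1 r hr).hasDerivAt.fun_pow 3).fun_mul (hh3 r hr).hasDerivAt
    have t3 := ((hh1 r hr).hasDerivAt.fun_pow 2).const_mul 3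
    have t4 := ((hh1 r hr).hasDerivAt.fun_pow 4).const_mul (lam / 4)
    refine (((t1.fun_add t2).fun_sub t3).fun_sub t4).congr_deriv ?_
    push_cast; ring
  have hQ := (hFD.fun_mul (hudiff r hr).hasDerivAt).fun_div (hh2 r hr).hasDerivAt (hne r hr)
  have hkd : deriv (fun x => deriv k x * (h x) ^ 3 * u x) r
      = (((6 * h r * (deriv h r) ^ 3 + 9 * h r ^ 2 * deriv h r * deriv (deriv h) r
        + h r ^ 3 * deriv (deriv (deriv h)) r - 6 * h r * deriv h r
        - lam * h r ^ 3 * deriv h r) * u r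
        + (3 * h r ^ 2 * (deriv h r) ^ 2 + h r ^ 3 * deriv (deriv h) r
          - 3 * h r ^ 2 - lam / 4 * h r ^ 4) * deriv u r) * deriv h r
        - (3 * h r ^ 2 * (deriv h r) ^ 2 + h r ^ 3 * deriv (deriv h) r
          - 3 * h r ^ 2 - lam / 4 * h r ^ 4) * u r * deriv (deriv h) r) / (deriv h r) ^ 2 := by
    rw [hev_k.deriv_eq]; exact hQ.deriv
  have he2 := hE2 r hr
  rw [hsecond, hkd] at he2
  have hne' := hne r hr
  field_simp at he2 ⊢
  linear_combination (-1 : ℝ) * he2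
end

section
/- Let I ⊆ ℝ be an open interval, λ ∈ ℝ, and let h, θ, k : I → ℝ be sufficiently smooth (h three times differentiable, θ twice differentiable, k twice differentiable) with h > 0 on I, h'(r) = cos(3θ(r)) for all r ∈ I, and h'(r) ≠ 0 on I. Suppose the equations (E2) (h³ sin 3θ)'' − 12 h sin 3θ − λ h³ sin 3θ − (k' h³ sin 3θ)' = 0 and (E3) (h³ cos 3θ)' − 3h² − (λ/4) h⁴ − k' h³ cos 3θ = 0 hold on I. Then h satisfies on I the third-order ODE: h³(h')³h''' − h³ h' h''' − 2h³(h')²(h'')² + 3h²(h')⁴h'' − 6h(h')² + h³(h'')² − 3h² h'' + 12h(h')⁴ − 6h(h')⁶ + (λ/4)h⁴(h')²h'' − (λ/4)h⁴h'' = 0. -/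
open Real

/-- The final reduction of the nearly Kähler soliton system to a single third
order nonlinear ODE for `h`, valid whenever `h' = cos 3θ` is nowhere zero. -/
theorem nk_soliton_third_order_ode
    (a b lam : ℝ) (h θ k : ℝ → ℝ)
    (I : Set ℝ) (hI : I = Set.Ioo a b)
    (hpos : ∀ r ∈ I, 0 < h r)
    (hh1 : ∀ r ∈ I, DifferentiableAt ℝ h r)
    (hh2 : ∀ r ∈ I, DifferentiableAt ℝ (deriv h) r)
    (hh3 : ∀ r ∈ I, DifferentiableAt ℝ (deriv (deriv h)) r)
    (hθ1 : ∀ r ∈ I, DifferentiableAt ℝ θ r)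
    (hθ2 : ∀ r ∈ I, DifferentiableAt ℝ (deriv θ) r)
    (hk1 : ∀ r ∈ I, DifferentiableAt ℝ k r)
    (hk2 : ∀ r ∈ I, DifferentiableAt ℝ (deriv k) r)
    (hE1 : ∀ r ∈ I, deriv h r = Real.cos (3 * θ r))
    (hne : ∀ r ∈ I, deriv h r ≠ 0)
    (hE2 : ∀ r ∈ I,
      deriv (deriv (fun x => (h x) ^ 3 * Real.sin (3 * θ x))) r
        - 12 * h r * Real.sin (3 * θ r) - lam * (h r) ^ 3 * Real.sin (3 * θ r)
        - deriv (fun x => deriv k x * (h x) ^ 3 * Real.sin (3 * θ x)) r = 0)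
    (hE3 : ∀ r ∈ I,
      deriv (fun x => (h x) ^ 3 * Real.cos (3 * θ x)) r
        - 3 * (h r) ^ 2 - (lam / 4) * (h r) ^ 4
        - deriv k r * (h r) ^ 3 * Real.cos (3 * θ r) = 0) :
    ∀ r ∈ I,
      (h r) ^ 3 * (deriv h r) ^ 3 * deriv (deriv (deriv h)) r
        - (h r) ^ 3 * deriv h r * deriv (deriv (deriv h)) r
        - 2 * (h r) ^ 3 * (deriv h r) ^ 2 * (deriv (deriv h) r) ^ 2
        + 3 * (h r) ^ 2 * (deriv h r) ^ 4 * deriv (deriv h) r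
        - 6 * h r * (deriv h r) ^ 2
        + (h r) ^ 3 * (deriv (deriv h) r) ^ 2
        - 3 * (h r) ^ 2 * deriv (deriv h) r
        + 12 * h r * (deriv h r) ^ 4
        - 6 * h r * (deriv h r) ^ 6
        + (lam / 4) * (h r) ^ 4 * (deriv h r) ^ 2 * deriv (deriv h) r
        - (lam / 4) * (h r) ^ 4 * deriv (deriv h) r = 0 := by
  have hIo : IsOpen I := hI ▸ isOpen_Ioo
  -- (A)  h'' = -sin(3θ) * (3 θ')  on I
  have lemA : ∀ x ∈ I, deriv (deriv h) x = -Real.sin (3 * θ x) * (3 * deriv θ x) := by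
    intro x hx
    have hev : deriv h =ᶠ[nhds x] (fun y => Real.cos (3 * θ y)) :=
      Filter.eventuallyEq_of_mem (hIo.mem_nhds hx) (fun y hy => hE1 y hy)
    rw [hev.deriv_eq]
    exact (((hθ1 x hx).hasDerivAt.const_mul 3).cos).deriv
  -- (L3)  (h³ cos 3θ)' pointwise on I
  have lemC : ∀ x ∈ I, deriv (fun y => (h y) ^ 3 * Real.cos (3 * θ y)) x
      = 3 * h x ^ 2 * deriv h x * Real.cos (3 * θ x)
        + h x ^ 3 * (-Real.sin (3 * θ x) * (3 * deriv θ x)) := by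
    intro x hx
    have HD := ((hh1 x hx).hasDerivAt.pow 3).mul (((hθ1 x hx).hasDerivAt.const_mul 3).cos)
    have HD' : HasDerivAt (fun y => (h y) ^ 3 * Real.cos (3 * θ y))
        (3 * h x ^ 2 * deriv h x * Real.cos (3 * θ x)
          + h x ^ 3 * (-Real.sin (3 * θ x) * (3 * deriv θ x))) x := by
      exact HD.congr_deriv (by simp only [Pi.pow_apply, Pi.mul_apply, Pi.neg_apply]; push_cast; ring)
    exact HD'.deriv
  -- (L4)  (h³ sin 3θ)' pointwise on I
  have lemS : ∀ x ∈ I, deriv (fun y => (h y) ^ 3 * Real.sin (3 * θ y)) x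
      = 3 * h x ^ 2 * deriv h x * Real.sin (3 * θ x)
        + h x ^ 3 * (Real.cos (3 * θ x) * (3 * deriv θ x)) := by
    intro x hx
    have HD := ((hh1 x hx).hasDerivAt.pow 3).mul (((hθ1 x hx).hasDerivAt.const_mul 3).sin)
    have HD' : HasDerivAt (fun y => (h y) ^ 3 * Real.sin (3 * θ y))
        (3 * h x ^ 2 * deriv h x * Real.sin (3 * θ x)
          + h x ^ 3 * (Real.cos (3 * θ x) * (3 * deriv θ x))) x := by
      exact HD.congr_deriv (by simp only [Pi.pow_apply, Pi.mul_apply, Pi.neg_apply]; push_cast; ring)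
    exact HD'.deriv
  intro r hr
  have hnr : I ∈ nhds r := hIo.mem_nhds hr
  -- notation for point values
  have hθr := (hθ1 r hr).hasDerivAt
  have hθ'r := (hθ2 r hr).hasDerivAt
  have hhr := (hh1 r hr).hasDerivAt
  have hh'r := (hh2 r hr).hasDerivAt
  have hk'r := (hk2 r hr).hasDerivAt
  have hsinr : HasDerivAt (fun y => Real.sin (3 * θ y))
      (Real.cos (3 * θ r) * (3 * deriv θ r)) r := (hθr.const_mul 3).sin
  have hcosr : HasDerivAt (fun y => Real.cos (3 * θ y))
      (-Real.sin (3 * θ r) * (3 * deriv θ r)) r := (hθr.const_mul 3).cos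
  -- e2 :  h''  =  -S·(3 T1)
  have e2 : deriv (deriv h) r = -Real.sin (3 * θ r) * (3 * deriv θ r) := lemA r hr
  -- e3 :  h''' computed from differentiating lemA
  have e3 : deriv (deriv (deriv h)) r
      = -(Real.cos (3 * θ r) * (3 * deriv θ r)) * (3 * deriv θ r)
        + -Real.sin (3 * θ r) * (3 * deriv (deriv θ) r) := by
    have hev : deriv (deriv h) =ᶠ[nhds r]
        (fun y => -Real.sin (3 * θ y) * (3 * deriv θ y)) :=
      Filter.eventuallyEq_of_mem hnr (fun y hy => lemA y hy)
    rw [hev.deriv_eq]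
    have HD := (hsinr.neg).mul (hθ'r.const_mul 3)
    have HD' : HasDerivAt (fun y => -Real.sin (3 * θ y) * (3 * deriv θ y))
        (-(Real.cos (3 * θ r) * (3 * deriv θ r)) * (3 * deriv θ r)
          + -Real.sin (3 * θ r) * (3 * deriv (deriv θ) r)) r := by
      exact HD.congr_deriv (by simp only [Pi.neg_apply])
    exact HD'.deriv
  rw [← hE1 r hr] at e3
  -- e4 :  S² + (h')² = 1
  have e4 : Real.sin (3 * θ r) ^ 2 + (deriv h r) ^ 2 = 1 := by
    rw [hE1 r hr]; exact Real.sin_sq_add_cos_sq (3 * θ r)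
  -- e5 :  E3 at r, with derivative expanded
  have e5 := hE3 r hr
  rw [lemC r hr] at e5
  rw [← hE1 r hr] at e5
  -- e6 :  E2 at r, with both derivatives expanded
  have e6 := hE2 r hr
  -- second derivative of h³ sin 3θ
  have d2 : deriv (deriv (fun x => (h x) ^ 3 * Real.sin (3 * θ x))) r
      = 6 * h r * (deriv h r) ^ 2 * Real.sin (3 * θ r)
        + 3 * h r ^ 2 * deriv (deriv h) r * Real.sin (3 * θ r)
        + 18 * h r ^ 2 * deriv h r * Real.cos (3 * θ r) * deriv θ r
        - 9 * h r ^ 3 * Real.sin (3 * θ r) * (deriv θ r) ^ 2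
        + 3 * h r ^ 3 * Real.cos (3 * θ r) * deriv (deriv θ) r := by
    have hev : deriv (fun x => (h x) ^ 3 * Real.sin (3 * θ x)) =ᶠ[nhds r]
        (fun y => 3 * h y ^ 2 * deriv h y * Real.sin (3 * θ y)
          + h y ^ 3 * (Real.cos (3 * θ y) * (3 * deriv θ y))) :=
      Filter.eventuallyEq_of_mem hnr (fun y hy => lemS y hy)
    rw [hev.deriv_eq]
    have t1 : HasDerivAt (fun y => 3 * h y ^ 2) (6 * h r * deriv h r) r := by
      exact ((hhr.pow 2).const_mul 3).congr_deriv (by push_cast; ring)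
    have HD := ((t1.mul hh'r).mul hsinr).add
      ((hhr.pow 3).mul (hcosr.mul (hθ'r.const_mul 3)))
    have HD' : HasDerivAt (fun y => 3 * h y ^ 2 * deriv h y * Real.sin (3 * θ y)
          + h y ^ 3 * (Real.cos (3 * θ y) * (3 * deriv θ y)))
        (6 * h r * (deriv h r) ^ 2 * Real.sin (3 * θ r)
          + 3 * h r ^ 2 * deriv (deriv h) r * Real.sin (3 * θ r)
          + 18 * h r ^ 2 * deriv h r * Real.cos (3 * θ r) * deriv θ r
          - 9 * h r ^ 3 * Real.sin (3 * θ r) * (deriv θ r) ^ 2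
          + 3 * h r ^ 3 * Real.cos (3 * θ r) * deriv (deriv θ) r) r := by
      exact HD.congr_deriv (by simp only [Pi.pow_apply, Pi.mul_apply, Pi.neg_apply]; push_cast; ring)
    exact HD'.deriv
  -- derivative of k' h³ sin 3θ
  have dk : deriv (fun x => deriv k x * (h x) ^ 3 * Real.sin (3 * θ x)) r
      = deriv (deriv k) r * h r ^ 3 * Real.sin (3 * θ r)
        + 3 * deriv k r * h r ^ 2 * deriv h r * Real.sin (3 * θ r)
        + 3 * deriv k r * h r ^ 3 * Real.cos (3 * θ r) * deriv θ r := by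
    have HD := ((hk'r.mul (hhr.pow 3)).mul hsinr)
    have HD' : HasDerivAt (fun x => deriv k x * (h x) ^ 3 * Real.sin (3 * θ x))
        (deriv (deriv k) r * h r ^ 3 * Real.sin (3 * θ r)
          + 3 * deriv k r * h r ^ 2 * deriv h r * Real.sin (3 * θ r)
          + 3 * deriv k r * h r ^ 3 * Real.cos (3 * θ r) * deriv θ r) r := by
      exact HD.congr_deriv (by simp only [Pi.pow_apply, Pi.mul_apply, Pi.neg_apply]; push_cast; ring)
    exact HD'.deriv
  rw [d2, dk] at e6
  rw [← hE1 r hr] at e6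
  -- e7 :  derivative of the (identically zero) E3 expression
  have e7 : 6 * h r * (deriv h r) ^ 2 * Real.cos (3 * θ r)
      + 3 * h r ^ 2 * deriv (deriv h) r * Real.cos (3 * θ r)
      - 18 * h r ^ 2 * deriv h r * Real.sin (3 * θ r) * deriv θ r
      - 9 * h r ^ 3 * Real.cos (3 * θ r) * (deriv θ r) ^ 2
      - 3 * h r ^ 3 * Real.sin (3 * θ r) * deriv (deriv θ) r
      - 6 * h r * deriv h r - lam * h r ^ 3 * deriv h r
      - deriv (deriv k) r * h r ^ 3 * Real.cos (3 * θ r)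
      - 3 * deriv k r * h r ^ 2 * deriv h r * Real.cos (3 * θ r)
      + 3 * deriv k r * h r ^ 3 * Real.sin (3 * θ r) * deriv θ r = 0 := by
    set W : ℝ → ℝ := fun x => 3 * h x ^ 2 * deriv h x * Real.cos (3 * θ x)
      + h x ^ 3 * (-Real.sin (3 * θ x) * (3 * deriv θ x))
      - 3 * h x ^ 2 - lam / 4 * h x ^ 4
      - deriv k x * h x ^ 3 * Real.cos (3 * θ x) with hW
    have hW0 : ∀ x ∈ I, W x = 0 := by
      intro x hx
      have hz := hE3 x hx
      rw [lemC x hx] at hz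
      rw [hW]; dsimp only; linarith
    have hWev : W =ᶠ[nhds r] (fun _ => (0 : ℝ)) :=
      Filter.eventuallyEq_of_mem hnr (fun y hy => hW0 y hy)
    have hderiv0 : deriv W r = 0 := by
      rw [hWev.deriv_eq]; exact deriv_const r 0
    have t1 : HasDerivAt (fun y => 3 * h y ^ 2) (6 * h r * deriv h r) r := by
      exact ((hhr.pow 2).const_mul 3).congr_deriv (by push_cast; ring)
    have HD := (((((t1.mul hh'r).mul hcosr).add
        ((hhr.pow 3).mul ((hsinr.neg).mul (hθ'r.const_mul 3)))).sub t1).sub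
        ((hhr.pow 4).const_mul (lam / 4))).sub
        ((hk'r.mul (hhr.pow 3)).mul hcosr)
    have HD' : HasDerivAt W
        (6 * h r * (deriv h r) ^ 2 * Real.cos (3 * θ r)
          + 3 * h r ^ 2 * deriv (deriv h) r * Real.cos (3 * θ r)
          - 18 * h r ^ 2 * deriv h r * Real.sin (3 * θ r) * deriv θ r
          - 9 * h r ^ 3 * Real.cos (3 * θ r) * (deriv θ r) ^ 2
          - 3 * h r ^ 3 * Real.sin (3 * θ r) * deriv (deriv θ) r
          - 6 * h r * deriv h r - lam * h r ^ 3 * deriv h r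
          - deriv (deriv k) r * h r ^ 3 * Real.cos (3 * θ r)
          - 3 * deriv k r * h r ^ 2 * deriv h r * Real.cos (3 * θ r)
          + 3 * deriv k r * h r ^ 3 * Real.sin (3 * θ r) * deriv θ r) r := by
      rw [hW]; exact HD.congr_deriv (by simp only [Pi.pow_apply, Pi.mul_apply, Pi.neg_apply]; push_cast; ring)
    have := HD'.deriv
    rw [hderiv0] at this
    linarith
  rw [← hE1 r hr] at e7
  -- Abbreviations matching the computer-algebra certificate:
  --   H = h r, H1 = h', H2 = h'', H3 = h''', S = sin 3θ, T1 = θ', T2 = θ'',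
  --   K1 = k', K2 = k'', L = lam.
  have key : h r ^ 3 *
      ((h r) ^ 3 * (deriv h r) ^ 3 * deriv (deriv (deriv h)) r
        - (h r) ^ 3 * deriv h r * deriv (deriv (deriv h)) r
        - 2 * (h r) ^ 3 * (deriv h r) ^ 2 * (deriv (deriv h) r) ^ 2
        + 3 * (h r) ^ 2 * (deriv h r) ^ 4 * deriv (deriv h) r
        - 6 * h r * (deriv h r) ^ 2
        + (h r) ^ 3 * (deriv (deriv h) r) ^ 2
        - 3 * (h r) ^ 2 * deriv (deriv h) r
        + 12 * h r * (deriv h r) ^ 4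
        - 6 * h r * (deriv h r) ^ 6
        + (lam / 4) * (h r) ^ 4 * (deriv h r) ^ 2 * deriv (deriv h) r
        - (lam / 4) * (h r) ^ 4 * deriv (deriv h) r) = 0 := by
    linear_combination
      (h r ^ 3 * (deriv h r) ^ 2 * Real.sin (3 * θ r) ^ 3) * e6
      - (h r ^ 3 * deriv h r * Real.sin (3 * θ r) ^ 4) * e7
      + ((-1/4 : ℝ) * h r ^ 7 * (deriv h r) ^ 2 * Real.sin (3 * θ r) ^ 2 * lam
        + (-1/4 : ℝ) * h r ^ 7 * Real.sin (3 * θ r) ^ 4 * lam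
        - h r ^ 6 * (deriv h r) ^ 4 * deriv (deriv h) r
        + 3 * h r ^ 6 * (deriv h r) ^ 4 * Real.sin (3 * θ r) * deriv θ r
        + h r ^ 6 * deriv (deriv h) r * Real.sin (3 * θ r) ^ 4
        - 3 * h r ^ 6 * Real.sin (3 * θ r) ^ 5 * deriv θ r
        - 3 * h r ^ 5 * (deriv h r) ^ 4 * Real.sin (3 * θ r) ^ 2
        - 3 * h r ^ 5 * (deriv h r) ^ 2 * Real.sin (3 * θ r) ^ 4
        - 3 * h r ^ 5 * (deriv h r) ^ 2 * Real.sin (3 * θ r) ^ 2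
        - 3 * h r ^ 5 * Real.sin (3 * θ r) ^ 4) * e2
      + (- h r ^ 6 * (deriv h r) ^ 3 * Real.sin (3 * θ r) ^ 2
        - h r ^ 6 * deriv h r * Real.sin (3 * θ r) ^ 4) * e3
      + ((1/4 : ℝ) * h r ^ 7 * deriv (deriv h) r * Real.sin (3 * θ r) ^ 2 * lam
        + (1/4 : ℝ) * h r ^ 7 * deriv (deriv h) r * lam
        + h r ^ 6 * (deriv h r) ^ 2 * (deriv (deriv h) r) ^ 2
        + h r ^ 6 * deriv h r * deriv (deriv (deriv h)) r * Real.sin (3 * θ r) ^ 2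
        + h r ^ 6 * deriv h r * deriv (deriv (deriv h)) r
        - h r ^ 6 * (deriv (deriv h) r) ^ 2 * Real.sin (3 * θ r) ^ 2
        - h r ^ 6 * (deriv (deriv h) r) ^ 2
        + 3 * h r ^ 5 * (deriv h r) ^ 2 * deriv (deriv h) r * Real.sin (3 * θ r) ^ 2
        + 3 * h r ^ 5 * (deriv h r) ^ 2 * deriv (deriv h) r
        + 3 * h r ^ 5 * deriv (deriv h) r * Real.sin (3 * θ r) ^ 2
        + 3 * h r ^ 5 * deriv (deriv h) r
        - 6 * h r ^ 4 * (deriv h r) ^ 4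
        + 6 * h r ^ 4 * (deriv h r) ^ 2 * Real.sin (3 * θ r) ^ 2
        + 6 * h r ^ 4 * (deriv h r) ^ 2) * e4
      + (- 3 * h r ^ 3 * (deriv h r) ^ 2 * Real.sin (3 * θ r) ^ 3 * deriv θ r
        - 3 * h r ^ 3 * Real.sin (3 * θ r) ^ 5 * deriv θ r) * e5
  have h3 : h r ^ 3 ≠ 0 := pow_ne_zero 3 (ne_of_gt (hpos r hr))
  exact (mul_eq_zero.mp key).resolve_left h3
end

section
/- Let I ⊆ ℝ be an open interval, λ ∈ ℝ, and let h : I → ℝ be three times differentiable with h > 0 and h'(r) ≠ 0 on I, satisfying the third-order ODE h³(h')³h''' − h³ h' h''' − 2h³(h')²(h'')² + 3h²(h')⁴h'' − 6h(h')² + h³(h'')² − 3h² h'' + 12h(h')⁴ − 6h(h')⁶ + (λ/4)h⁴(h')²h'' − (λ/4)h⁴h'' = 0 on I, together with |h'(r)| ≤ 1 on I. Define u : I → ℝ with u ≥ 0 by u(r) = √(1 − h'(r)²), and suppose u(r) ≠ 0 on I. Define s : I → ℝ by s = (3h²h' + h³h''/h' − 3h²/h' − λh⁴/(4h'))/h³.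 Then on I the pair (h, u, s) satisfies: u² = 1 − (h')², (h³ u)'' − 12 h u − λ h³ u − (s h³ u)' = 0, and (h³ h')' − 3h² − (λ/4)h⁴ − s h³ h' = 0. -/
set_option maxHeartbeats 2000000


open Real

/-- Converse of the reduction: a positive solution `h` of the third-order
soliton ODE with `0 < |h'| ≤ 1` algebraically determines `u = sin 3θ` (via
`u = √(1 - (h')²)`, the nonnegative branch, assumed nonvanishing) and
`k' = s`, which then satisfy the nearly Kähler soliton system with
`cos 3θ = h'`. -/
theorem nk_soliton_ode_converse
    (a b lam : ℝ) (h u s : ℝ → ℝ)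
    (I : Set ℝ) (hI : I = Set.Ioo a b)
    (hpos : ∀ r ∈ I, 0 < h r)
    (hh1 : ∀ r ∈ I, DifferentiableAt ℝ h r)
    (hh2 : ∀ r ∈ I, DifferentiableAt ℝ (deriv h) r)
    (hh3 : ∀ r ∈ I, DifferentiableAt ℝ (deriv (deriv h)) r)
    (hne : ∀ r ∈ I, deriv h r ≠ 0)
    (hbd : ∀ r ∈ I, |deriv h r| ≤ 1)
    (hODE : ∀ r ∈ I,
      (h r) ^ 3 * (deriv h r) ^ 3 * deriv (deriv (deriv h)) r
        - (h r) ^ 3 * deriv h r * deriv (deriv (deriv h)) r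
        - 2 * (h r) ^ 3 * (deriv h r) ^ 2 * (deriv (deriv h) r) ^ 2
        + 3 * (h r) ^ 2 * (deriv h r) ^ 4 * deriv (deriv h) r
        - 6 * h r * (deriv h r) ^ 2
        + (h r) ^ 3 * (deriv (deriv h) r) ^ 2
        - 3 * (h r) ^ 2 * deriv (deriv h) r
        + 12 * h r * (deriv h r) ^ 4
        - 6 * h r * (deriv h r) ^ 6
        + (lam / 4) * (h r) ^ 4 * (deriv h r) ^ 2 * deriv (deriv h) r
        - (lam / 4) * (h r) ^ 4 * deriv (deriv h) r = 0)
    (hu : ∀ r ∈ I, u r = Real.sqrt (1 - (deriv h r) ^ 2))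
    (hu0 : ∀ r ∈ I, u r ≠ 0)
    (hs : ∀ r ∈ I,
      s r = (3 * (h r) ^ 2 * deriv h r
              + (h r) ^ 3 * deriv (deriv h) r / deriv h r
              - 3 * (h r) ^ 2 / deriv h r
              - lam * (h r) ^ 4 / (4 * deriv h r)) / (h r) ^ 3) :
    (∀ r ∈ I, (u r) ^ 2 = 1 - (deriv h r) ^ 2) ∧
    (∀ r ∈ I,
      deriv (deriv (fun x => (h x) ^ 3 * u x)) r
        - 12 * h r * u r - lam * (h r) ^ 3 * u r
        - deriv (fun x => s x * (h x) ^ 3 * u x) r = 0) ∧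
    (∀ r ∈ I,
      deriv (fun x => (h x) ^ 3 * deriv h x) r
        - 3 * (h r) ^ 2 - (lam / 4) * (h r) ^ 4
        - s r * (h r) ^ 3 * deriv h r = 0) := by
  have hIopen : IsOpen I := by rw [hI]; exact isOpen_Ioo
  have key : ∀ r ∈ I, (u r) ^ 2 = 1 - (deriv h r) ^ 2 := by
    intro r hr
    have hb := abs_le.mp (hbd r hr)
    rw [hu r hr, Real.sq_sqrt (by nlinarith [hb.1, hb.2])]
  have hsq : ∀ r ∈ I, 0 < 1 - (deriv h r) ^ 2 := by
    intro r hr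
    have h1 : 0 < (u r) ^ 2 :=
      lt_of_le_of_ne (sq_nonneg _) (Ne.symm (pow_ne_zero 2 (hu0 r hr)))
    rw [key r hr] at h1; exact h1
  have hU' : ∀ x ∈ I, HasDerivAt u
      (-(deriv h x * deriv (deriv h) x) / u x) x := by
    intro x hx
    have hx1 : 0 < 1 - (deriv h x) ^ 2 := hsq x hx
    have hP : HasDerivAt (deriv h) (deriv (deriv h) x) x := (hh2 x hx).hasDerivAt
    have hg : HasDerivAt (fun y => 1 - (deriv h y) ^ 2)
        (-(2 * deriv h x ^ 1 * deriv (deriv h) x)) x := (hP.pow 2).const_sub 1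
    have hsqrt := (Real.hasDerivAt_sqrt (ne_of_gt hx1)).comp x hg
    have heq : u =ᶠ[nhds x] (Real.sqrt ∘ fun y => 1 - (deriv h y) ^ 2) :=
      Filter.eventuallyEq_of_mem (hIopen.mem_nhds hx) (fun y hy => hu y hy)
    have hres := hsqrt.congr_of_eventuallyEq heq
    refine hres.congr_deriv ?_
    have hs0 : Real.sqrt (1 - (deriv h x) ^ 2) ≠ 0 :=
      ne_of_gt (Real.sqrt_pos.mpr hx1)
    rw [hu x hx]
    field_simp
  have hF' : ∀ x ∈ I, HasDerivAt (fun y => (h y) ^ 3 * u y)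
      (3 * h x ^ 2 * deriv h x * u x
        + h x ^ 3 * (-(deriv h x * deriv (deriv h) x) / u x)) x := by
    intro x hx
    have := ((hh1 x hx).hasDerivAt.pow 3).mul (hU' x hx)
    refine this.congr_deriv ?_
    norm_num
  refine ⟨key, ?_, ?_⟩
  · intro r hr
    have hmem : I ∈ nhds r := hIopen.mem_nhds hr
    have hH : HasDerivAt h (deriv h r) r := (hh1 r hr).hasDerivAt
    have hP : HasDerivAt (deriv h) (deriv (deriv h) r) r := (hh2 r hr).hasDerivAt
    have hQ : HasDerivAt (deriv (deriv h)) (deriv (deriv (deriv h)) r) r :=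
      (hh3 r hr).hasDerivAt
    have hU : HasDerivAt u (-(deriv h r * deriv (deriv h) r) / u r) r := hU' r hr
    have hU0 : u r ≠ 0 := hu0 r hr
    have hP0 : deriv h r ≠ 0 := hne r hr
    have hdF : deriv (fun y => (h y) ^ 3 * u y) =ᶠ[nhds r]
        (fun x => 3 * h x ^ 2 * deriv h x * u x
          + h x ^ 3 * (-(deriv h x * deriv (deriv h) x) / u x)) :=
      Filter.eventuallyEq_of_mem hmem (fun x hx => (hF' x hx).deriv)
    have hd2 : deriv (deriv (fun y => (h y) ^ 3 * u y)) r
        = deriv (fun x => 3 * h x ^ 2 * deriv h x * u x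
          + h x ^ 3 * (-(deriv h x * deriv (deriv h) x) / u x)) r := hdF.deriv_eq
    have hE := ((((hH.pow 2).const_mul 3).mul hP).mul hU).add
      ((hH.pow 3).mul (((hP.mul hQ).neg).div hU hU0))
    have hGB : (fun x => s x * (h x) ^ 3 * u x) =ᶠ[nhds r]
        (fun x => (3 * h x ^ 2 * deriv h x
          + h x ^ 3 * deriv (deriv h) x / deriv h x
          - 3 * h x ^ 2 / deriv h x
          - lam * h x ^ 4 / (4 * deriv h x)) * u x) := by
      refine Filter.eventuallyEq_of_mem hmem (fun x hx => ?_)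
      rw [hs x hx]
      have hx0 : h x ≠ 0 := ne_of_gt (hpos x hx)
      have hxp : deriv h x ≠ 0 := hne x hx
      field_simp
    have hB := (((((hH.pow 2).const_mul 3).mul hP).add
        (((hH.pow 3).mul hQ).div hP hP0)).sub
        (((hH.pow 2).const_mul 3).div hP hP0)).sub
        ((((hH.pow 4).const_mul lam)).div (hP.const_mul 4)
          (mul_ne_zero (by norm_num) hP0))
    have hB' := hB.mul hU
    rw [hd2, HasDerivAt.deriv (f := fun x => 3 * h x ^ 2 * deriv h x * u x
          + h x ^ 3 * (-(deriv h x * deriv (deriv h) x) / u x)) hE, hGB.deriv_eq,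
      HasDerivAt.deriv (f := fun x => (3 * h x ^ 2 * deriv h x
          + h x ^ 3 * deriv (deriv h) x / deriv h x
          - 3 * h x ^ 2 / deriv h x
          - lam * h x ^ 4 / (4 * deriv h x)) * u x) hB']
    norm_num only [Pi.pow_apply, Pi.mul_apply, Pi.div_apply, Pi.add_apply, Pi.sub_apply,
      Pi.neg_apply, Nat.cast_ofNat]
    have hode := hODE r hr
    have hkey := key r hr
    linear_combination (norm := (field_simp; ring))
      (1 / (u r ^ 3 * deriv h r ^ 2)) * hode
      + ((-(6 * h r * deriv h r ^ 2 + 3 * h r ^ 2 * deriv h r ^ 2 * deriv (deriv h) r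
          + h r ^ 3 * deriv h r * deriv (deriv (deriv h)) r
          - h r ^ 3 * deriv (deriv h) r ^ 2 + 3 * h r ^ 2 * deriv (deriv h) r
          + (lam / 4) * h r ^ 4 * deriv (deriv h) r) * u r ^ 2
        - 3 * h r ^ 2 * deriv h r ^ 2 * deriv (deriv h) r
        - 6 * h r * deriv h r ^ 2 + 6 * h r * deriv h r ^ 4
        - h r ^ 3 * deriv h r * deriv (deriv (deriv h)) r
        + h r ^ 3 * deriv (deriv h) r ^ 2
        - h r ^ 3 * deriv h r ^ 2 * deriv (deriv h) r ^ 2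
        - 3 * h r ^ 2 * deriv (deriv h) r
        - (lam / 4) * h r ^ 4 * deriv (deriv h) r)
        / (u r ^ 3 * deriv h r ^ 2)) * hkey
  · intro r hr
    have hH : HasDerivAt h (deriv h r) r := (hh1 r hr).hasDerivAt
    have hP : HasDerivAt (deriv h) (deriv (deriv h) r) r := (hh2 r hr).hasDerivAt
    rw [HasDerivAt.deriv (f := fun x => h x ^ 3 * deriv h x) ((hH.pow 3).mul hP), hs r hr]
    norm_num only [Pi.pow_apply, Pi.mul_apply, Nat.cast_ofNat]
    have hx0 : h r ≠ 0 := ne_of_gt (hpos r hr)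
    have hxp : deriv h r ≠ 0 := hne r hr
    field_simp
    ring
end
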